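/- arXiv:math/0508213 — 3 statements merged into one kernel-verified Lean document; each statement's English description precedes it below -/
import Mathlib

section
/- Fix β > 0, h ∈ ℝ and N ≥ 2. For x = (x_{ij})_{1≤i<j≤N} define F(x) := N⁻¹ log Σ_{σ∈{−1,1}^N} exp( β N^{-1/2} Σ_{i<j} x_{ij} σᵢσⱼ + β h Σ_{i≤N} σᵢ ). Then λ₂(F) ≤ 3 β² N⁻² and λ₃(F) ≤ 13 β³ N^{-5/2}. -/
open MeasureTheory ProbabilityTheory

/-- `N ⬝ f_σ(x) = β N^{-1/2} Σ_{i<j} x_{ij} σ_i σ_j + β h Σ_i σ_i`, where the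
spin configuration `σ ∈ {-1,1}^N` is encoded by `s : Fin N → Bool`. -/
noncomputable def skEnergy (N : ℕ) (β h : ℝ) (x : Fin N × Fin N → ℝ)
    (s : Fin N → Bool) : ℝ :=
  β * (Real.sqrt N)⁻¹ *
      ∑ q ∈ Finset.univ.filter (fun q : Fin N × Fin N => q.1 < q.2),
        x q * (if s q.1 then (1 : ℝ) else -1) * (if s q.2 then (1 : ℝ) else -1) +
    β * h * ∑ i, (if s i then (1 : ℝ) else -1)

/-- The free energy `F(x) = N⁻¹ log Σ_σ exp(β N^{-1/2} Σ_{i<j} x_{ij} σ_i σ_j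
+ β h Σ_i σ_i)` of the S-K model. -/
noncomputable def skFreeEnergy (N : ℕ) (β h : ℝ) (x : Fin N × Fin N → ℝ) : ℝ :=
  (N : ℝ)⁻¹ * Real.log (∑ s : Fin N → Bool, Real.exp (skEnergy N β h x s))

/-- The `p`-fold partial derivative in the coordinate `q` of a function of the
coupling variables `(x_{ij})`. -/
noncomputable def pderivSK (N : ℕ) (f : (Fin N × Fin N → ℝ) → ℝ)
    (q : Fin N × Fin N) (p : ℕ) (x : Fin N × Fin N → ℝ) : ℝ :=
  iteratedDeriv p (fun t => f (Function.update x q t)) (x q)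

/-- The set whose supremum is `λ_r(f)`, the coordinates being the pairs
`(i,j)` with `i < j`, with all of `ℝⁿ` as the domain. -/
def lamSetSK (N : ℕ) (f : (Fin N × Fin N → ℝ) → ℝ) (r : ℕ) : Set ℝ :=
  { y | ∃ (q : Fin N × Fin N) (p : ℕ) (x : Fin N × Fin N → ℝ),
      q.1 < q.2 ∧ 1 ≤ p ∧ p ≤ r ∧
      y = |pderivSK N f q p x| ^ ((r : ℝ) / (p : ℝ)) }

noncomputable def lamSK (N : ℕ) (f : (Fin N × Fin N → ℝ) → ℝ) (r : ℕ) : ℝ :=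
  sSup (lamSetSK N f r)

noncomputable def Zk {ι : Type*} [Fintype ι] (A b : ι → ℝ) (k : ℕ) (t : ℝ) : ℝ :=
  ∑ s, (b s) ^ k * Real.exp (A s + b s * t)

lemma Zk_pos {ι : Type*} [Fintype ι] [Nonempty ι] (A b : ι → ℝ) (t : ℝ) :
    0 < Zk A b 0 t := by
  unfold Zk
  simp only [pow_zero, one_mul]
  exact Finset.sum_pos (fun s _ => Real.exp_pos _) Finset.univ_nonempty

lemma Zk_hasDerivAt {ι : Type*} [Fintype ι] (A b : ι → ℝ) (k : ℕ) (t : ℝ) :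
    HasDerivAt (Zk A b k) (Zk A b (k+1) t) t := by
  unfold Zk
  apply HasDerivAt.fun_sum
  intro s _
  have h1 : HasDerivAt (fun t : ℝ => A s + b s * t) (b s) t := by
    simpa using ((hasDerivAt_id t).const_mul (b s)).const_add (A s)
  have h2 := (h1.exp).const_mul ((b s) ^ k)
  refine h2.congr_deriv ?_
  rw [pow_succ]; ring

lemma Zk_bound {ι : Type*} [Fintype ι] (A b : ι → ℝ) (c : ℝ) (hc : 0 ≤ c)
    (hb : ∀ s, |b s| ≤ c) (k : ℕ) (t : ℝ) :
    |Zk A b k t| ≤ c ^ k * Zk A b 0 t := by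
  calc |Zk A b k t| ≤ ∑ s, |(b s) ^ k * Real.exp (A s + b s * t)| :=
        Finset.abs_sum_le_sum_abs _ _
    _ ≤ ∑ s, c ^ k * Real.exp (A s + b s * t) := by
        apply Finset.sum_le_sum
        intro s _
        rw [abs_mul, abs_pow, abs_of_pos (Real.exp_pos _)]
        exact mul_le_mul_of_nonneg_right
          (pow_le_pow_left₀ (abs_nonneg _) (hb s) k) (Real.exp_pos _).le
    _ = c ^ k * Zk A b 0 t := by
        unfold Zk; simp only [pow_zero, one_mul]; rw [Finset.mul_sum]

lemma lse_bounds {ι : Type*} [Fintype ι] [Nonempty ι] (K c : ℝ) (hK : 0 ≤ K)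
    (hc : 0 ≤ c) (A b : ι → ℝ) (hb : ∀ s, |b s| ≤ c) (t : ℝ) :
    |iteratedDeriv 1 (fun t => K * Real.log (∑ s, Real.exp (A s + b s * t))) t| ≤ K * c ∧
    |iteratedDeriv 2 (fun t => K * Real.log (∑ s, Real.exp (A s + b s * t))) t| ≤ K * (2 * c ^ 2) ∧
    |iteratedDeriv 3 (fun t => K * Real.log (∑ s, Real.exp (A s + b s * t))) t| ≤ K * (6 * c ^ 3) := by
  have hfun : (fun t => K * Real.log (∑ s, Real.exp (A s + b s * t)))
      = fun t => K * Real.log (Zk A b 0 t) := by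
    funext u; unfold Zk; simp
  rw [hfun]
  have hpos : ∀ u : ℝ, 0 < Zk A b 0 u := Zk_pos A b
  -- first derivative
  have d1 : deriv (fun u => K * Real.log (Zk A b 0 u))
      = fun u => K * (Zk A b 1 u / Zk A b 0 u) := by
    funext u
    exact (((Zk_hasDerivAt A b 0 u).log (hpos u).ne').const_mul K).deriv
  -- second derivative
  have d2 : deriv (fun u => K * (Zk A b 1 u / Zk A b 0 u))
      = fun u => K * ((Zk A b 2 u * Zk A b 0 u - Zk A b 1 u * Zk A b 1 u) / (Zk A b 0 u) ^ 2) := by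
    funext u
    exact (((Zk_hasDerivAt A b 1 u).div (Zk_hasDerivAt A b 0 u) (hpos u).ne').const_mul K).deriv
  -- third derivative
  have d3 : deriv (fun u => K * ((Zk A b 2 u * Zk A b 0 u - Zk A b 1 u * Zk A b 1 u) / (Zk A b 0 u) ^ 2))
      = fun u => K * (((Zk A b 3 u * Zk A b 0 u + Zk A b 2 u * Zk A b 1 u
            - (Zk A b 2 u * Zk A b 1 u + Zk A b 1 u * Zk A b 2 u)) * (Zk A b 0 u) ^ 2
          - (Zk A b 2 u * Zk A b 0 u - Zk A b 1 u * Zk A b 1 u)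
              * (2 * (Zk A b 0 u) ^ 1 * Zk A b 1 u)) / ((Zk A b 0 u) ^ 2) ^ 2) := by
    funext u
    have hnum : HasDerivAt (fun u => Zk A b 2 u * Zk A b 0 u - Zk A b 1 u * Zk A b 1 u)
        (Zk A b 3 u * Zk A b 0 u + Zk A b 2 u * Zk A b 1 u
          - (Zk A b 2 u * Zk A b 1 u + Zk A b 1 u * Zk A b 2 u)) u :=
      ((Zk_hasDerivAt A b 2 u).mul (Zk_hasDerivAt A b 0 u)).sub
        ((Zk_hasDerivAt A b 1 u).mul (Zk_hasDerivAt A b 1 u))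
    have hden : HasDerivAt (fun u => (Zk A b 0 u) ^ 2)
        (2 * (Zk A b 0 u) ^ 1 * Zk A b 1 u) u := by
      simpa using ((Zk_hasDerivAt A b 0 u).fun_pow 2)
    exact ((hnum.div hden (pow_ne_zero 2 (hpos u).ne')).const_mul K).deriv
  -- ratio bounds
  have hr : ∀ (k : ℕ) (u : ℝ), |Zk A b k u / Zk A b 0 u| ≤ c ^ k := by
    intro k u
    rw [abs_div, abs_of_pos (hpos u), div_le_iff₀ (hpos u)]
    exact Zk_bound A b c hc hb k u
  refine ⟨?_, ?_, ?_⟩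
  · rw [iteratedDeriv_one, d1]
    rw [abs_mul, abs_of_nonneg hK]
    exact mul_le_mul_of_nonneg_left (by simpa using hr 1 t) hK
  · rw [show (2:ℕ) = 1 + 1 from rfl, iteratedDeriv_succ, iteratedDeriv_one, d1, d2]
    rw [abs_mul, abs_of_nonneg hK]
    refine mul_le_mul_of_nonneg_left ?_ hK
    have h0 : Zk A b 0 t ≠ 0 := (hpos t).ne'
    have key : (Zk A b 2 t * Zk A b 0 t - Zk A b 1 t * Zk A b 1 t) / (Zk A b 0 t) ^ 2
        = Zk A b 2 t / Zk A b 0 t - (Zk A b 1 t / Zk A b 0 t) * (Zk A b 1 t / Zk A b 0 t) := by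
      field_simp
    rw [key]
    calc |Zk A b 2 t / Zk A b 0 t - Zk A b 1 t / Zk A b 0 t * (Zk A b 1 t / Zk A b 0 t)|
        ≤ |Zk A b 2 t / Zk A b 0 t| + |Zk A b 1 t / Zk A b 0 t| * |Zk A b 1 t / Zk A b 0 t| := by
          rw [← abs_mul]; exact abs_sub _ _
      _ ≤ c ^ 2 + c ^ 1 * c ^ 1 := by
          gcongr <;> first | exact abs_nonneg _ | exact hr 2 t | exact hr 1 t
      _ ≤ 2 * c ^ 2 := le_of_eq (by ring)
  · rw [show (3:ℕ) = 1 + 1 + 1 from rfl, iteratedDeriv_succ, iteratedDeriv_succ,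
      iteratedDeriv_one, d1, d2, d3]
    rw [abs_mul, abs_of_nonneg hK]
    refine mul_le_mul_of_nonneg_left ?_ hK
    set Z0 := Zk A b 0 t
    set Z1 := Zk A b 1 t
    set Z2 := Zk A b 2 t
    set Z3 := Zk A b 3 t
    have h0 : (0:ℝ) < Z0 := hpos t
    have key : ((Z3 * Z0 + Z2 * Z1 - (Z2 * Z1 + Z1 * Z2)) * Z0 ^ 2
          - (Z2 * Z0 - Z1 * Z1) * (2 * Z0 ^ 1 * Z1)) / (Z0 ^ 2) ^ 2
        = Z3 / Z0 - 3 * ((Z2 / Z0) * (Z1 / Z0)) + 2 * ((Z1/Z0) * (Z1/Z0) * (Z1/Z0)) := by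
      field_simp
      ring
    rw [key]
    have hm2 : |Z2 / Z0| * |Z1 / Z0| ≤ c ^ 2 * c ^ 1 :=
      mul_le_mul (hr 2 t) (hr 1 t) (abs_nonneg _) (pow_nonneg hc 2)
    have hm1 : |Z1 / Z0| * |Z1 / Z0| * |Z1 / Z0| ≤ c ^ 1 * c ^ 1 * c ^ 1 :=
      mul_le_mul (mul_le_mul (hr 1 t) (hr 1 t) (abs_nonneg _) (pow_nonneg hc 1))
        (hr 1 t) (abs_nonneg _) (by positivity)
    have e3 : |Z3 / Z0| ≤ c ^ 3 := hr 3 t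
    have e2 : |3 * (Z2 / Z0 * (Z1 / Z0))| ≤ 3 * c ^ 3 := by
      rw [abs_mul, abs_mul, show |(3:ℝ)| = 3 by norm_num]
      nlinarith [hm2]
    have e1 : |2 * (Z1 / Z0 * (Z1 / Z0) * (Z1 / Z0))| ≤ 2 * c ^ 3 := by
      rw [abs_mul, abs_mul, abs_mul, show |(2:ℝ)| = 2 by norm_num]
      nlinarith [hm1]
    calc |Z3 / Z0 - 3 * (Z2 / Z0 * (Z1 / Z0)) + 2 * (Z1 / Z0 * (Z1 / Z0) * (Z1 / Z0))|
        ≤ |Z3 / Z0 - 3 * (Z2 / Z0 * (Z1 / Z0))| + |2 * (Z1 / Z0 * (Z1 / Z0) * (Z1 / Z0))| :=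
          abs_add_le _ _
      _ ≤ |Z3 / Z0| + |3 * (Z2 / Z0 * (Z1 / Z0))| + |2 * (Z1 / Z0 * (Z1 / Z0) * (Z1 / Z0))| := by
          linarith [abs_sub (Z3 / Z0) (3 * (Z2 / Z0 * (Z1 / Z0)))]
      _ ≤ c ^ 3 + 3 * c ^ 3 + 2 * c ^ 3 := by linarith
      _ = 6 * c ^ 3 := by ring

lemma skFE_update (N : ℕ) (β h : ℝ) (q : Fin N × Fin N) (hq : q.1 < q.2)
    (x : Fin N × Fin N → ℝ) :
    ∃ A b : (Fin N → Bool) → ℝ,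
      (∀ s, |b s| ≤ |β| * (Real.sqrt N)⁻¹) ∧
      (fun t => skFreeEnergy N β h (Function.update x q t))
        = fun t => (N : ℝ)⁻¹ * Real.log (∑ s, Real.exp (A s + b s * t)) := by
  classical
  set P := Finset.univ.filter (fun q : Fin N × Fin N => q.1 < q.2) with hP
  refine ⟨fun s => β * (Real.sqrt N)⁻¹ *
      ∑ q' ∈ P.erase q,
        x q' * (if s q'.1 then (1:ℝ) else -1) * (if s q'.2 then (1:ℝ) else -1)
      + β * h * ∑ i, (if s i then (1:ℝ) else -1),
    fun s => β * (Real.sqrt N)⁻¹ *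
      ((if s q.1 then (1:ℝ) else -1) * (if s q.2 then (1:ℝ) else -1)), ?_, ?_⟩
  · intro s
    rw [abs_mul, abs_mul, abs_mul]
    rw [abs_of_nonneg (inv_nonneg.mpr (Real.sqrt_nonneg _))]
    have h1 : |if s q.1 then (1:ℝ) else -1| = 1 := by split <;> norm_num
    have h2 : |if s q.2 then (1:ℝ) else -1| = 1 := by split <;> norm_num
    rw [h1, h2]
    simp
  · funext t
    unfold skFreeEnergy
    congr 1
    congr 1
    apply Finset.sum_congr rfl
    intro s _
    congr 1
    unfold skEnergy
    have hqmem : q ∈ P := by simp [hP, hq]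
    rw [← hP, ← Finset.add_sum_erase _ _ hqmem, Function.update_self]
    have herase : ∑ q' ∈ P.erase q,
        (Function.update x q t q') * (if s q'.1 then (1:ℝ) else -1)
          * (if s q'.2 then (1:ℝ) else -1)
        = ∑ q' ∈ P.erase q,
        x q' * (if s q'.1 then (1:ℝ) else -1) * (if s q'.2 then (1:ℝ) else -1) := by
      apply Finset.sum_congr rfl
      intro q' hq'
      rw [Function.update_of_ne (Finset.ne_of_mem_erase hq')]
    rw [herase]
    ring

theorem stmt12 {N : ℕ} (hN : 2 ≤ N) (β h : ℝ) (hβ : 0 < β) :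
    lamSK N (skFreeEnergy N β h) 2 ≤ 3 * β ^ 2 * ((N : ℝ) ^ 2)⁻¹ ∧
    lamSK N (skFreeEnergy N β h) 3 ≤
      13 * β ^ 3 * ((N : ℝ) ^ ((5 : ℝ) / 2))⁻¹ := by
  have hN0 : (0:ℝ) < N := by
    have : 0 < N := lt_of_lt_of_le (by norm_num) hN
    exact_mod_cast this
  have hN2 : (2:ℝ) ≤ N := by exact_mod_cast hN
  set s : ℝ := Real.sqrt N with hsdef
  have hsq : s ^ 2 = N := Real.sq_sqrt hN0.le
  have hs0 : 0 < s := Real.sqrt_pos.mpr hN0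
  have hs1 : 1 ≤ s := by nlinarith [hsq, hN2, hs0]
  set c : ℝ := β * s⁻¹ with hcdef
  clear_value s
  have hcpos : 0 < c := by positivity
  have hder : ∀ q : Fin N × Fin N, q.1 < q.2 → ∀ x : Fin N × Fin N → ℝ,
      |pderivSK N (skFreeEnergy N β h) q 1 x| ≤ (N:ℝ)⁻¹ * c ∧
      |pderivSK N (skFreeEnergy N β h) q 2 x| ≤ (N:ℝ)⁻¹ * (2 * c ^ 2) ∧
      |pderivSK N (skFreeEnergy N β h) q 3 x| ≤ (N:ℝ)⁻¹ * (6 * c ^ 3) := by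
    intro q hq x
    obtain ⟨A, b, hb, hfe⟩ := skFE_update N β h q hq x
    rw [← hsdef] at hb
    have hb' : ∀ u, |b u| ≤ c := by
      intro u
      have h2 := hb u
      rwa [abs_of_pos hβ] at h2
    unfold pderivSK
    rw [hfe]
    exact lse_bounds _ c (inv_nonneg.mpr hN0.le) hcpos.le A b hb' (x q)
  have h52 : (N:ℝ) ^ ((5:ℝ)/2) = s ^ 5 := by
    rw [← hsq, ← Real.rpow_natCast s 2, ← Real.rpow_natCast s 5,
      ← Real.rpow_mul hs0.le]
    norm_num
  constructor
  · apply Real.sSup_le _ (by positivity)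
    rintro y ⟨q, p, x, hq, hp1, hp2, rfl⟩
    obtain ⟨H1, H2, H3⟩ := hder q hq x
    interval_cases p
    · rw [show ((2:ℕ):ℝ)/((1:ℕ):ℝ) = ((2:ℕ):ℝ) by norm_num, Real.rpow_natCast]
      calc |pderivSK N (skFreeEnergy N β h) q 1 x| ^ 2 ≤ ((N:ℝ)⁻¹ * c) ^ 2 :=
            pow_le_pow_left₀ (abs_nonneg _) H1 2
        _ ≤ 3 * β ^ 2 * ((N:ℝ) ^ 2)⁻¹ := by
            rw [hcdef, ← hsq]
            field_simp
            nlinarith [pow_le_pow_right₀ hs1 (show 4 ≤ 6 by norm_num), sq_nonneg β,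
              mul_nonneg (sq_nonneg β) (pow_nonneg hs0.le 6)]
    · rw [show ((2:ℕ):ℝ)/((2:ℕ):ℝ) = 1 by norm_num, Real.rpow_one]
      calc |pderivSK N (skFreeEnergy N β h) q 2 x| ≤ (N:ℝ)⁻¹ * (2 * c ^ 2) := H2
        _ ≤ 3 * β ^ 2 * ((N:ℝ) ^ 2)⁻¹ := by
            rw [hcdef, ← hsq]
            field_simp
            nlinarith [mul_nonneg (sq_nonneg β) (pow_nonneg hs0.le 4)]
  · rw [h52]
    apply Real.sSup_le _ (by positivity)
    rintro y ⟨q, p, x, hq, hp1, hp2, rfl⟩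
    obtain ⟨H1, H2, H3⟩ := hder q hq x
    interval_cases p
    · rw [show ((3:ℕ):ℝ)/((1:ℕ):ℝ) = ((3:ℕ):ℝ) by norm_num, Real.rpow_natCast]
      calc |pderivSK N (skFreeEnergy N β h) q 1 x| ^ 3 ≤ ((N:ℝ)⁻¹ * c) ^ 3 :=
            pow_le_pow_left₀ (abs_nonneg _) H1 3
        _ ≤ 13 * β ^ 3 * (s ^ 5)⁻¹ := by
            rw [hcdef, ← hsq]
            field_simp
            nlinarith [pow_le_pow_right₀ hs1 (show 5 ≤ 9 by norm_num),
              mul_nonneg (pow_nonneg hβ.le 3) (pow_nonneg hs0.le 9),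
              mul_le_mul_of_nonneg_left (pow_le_pow_right₀ hs1 (show 5 ≤ 9 by norm_num))
                (pow_nonneg hβ.le 3)]
    · have hd0 := abs_nonneg (pderivSK N (skFreeEnergy N β h) q 2 x)
      have hmono : |pderivSK N (skFreeEnergy N β h) q 2 x| ^ (((3:ℕ):ℝ)/((2:ℕ):ℝ))
          ≤ ((N:ℝ)⁻¹ * (2 * c ^ 2)) ^ (((3:ℕ):ℝ)/((2:ℕ):ℝ)) :=
        Real.rpow_le_rpow hd0 H2 (by norm_num)
      refine le_trans hmono ?_
      have hBeq : (N:ℝ)⁻¹ * (2 * c ^ 2) = 2 * β ^ 2 * (s ^ 4)⁻¹ := by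
        rw [hcdef, ← hsq]
        field_simp
      rw [hBeq]
      have hBpos : (0:ℝ) < 2 * β ^ 2 * (s ^ 4)⁻¹ := by positivity
      have hsqrtB : Real.sqrt (2 * β ^ 2 * (s ^ 4)⁻¹)
          = Real.sqrt 2 * β * (s ^ 2)⁻¹ := by
        rw [show 2 * β ^ 2 * (s ^ 4)⁻¹ = (Real.sqrt 2 * β * (s ^ 2)⁻¹) ^ 2 by
          rw [mul_pow, mul_pow, Real.sq_sqrt (by norm_num : (0:ℝ) ≤ 2)]
          field_simp]
        exact Real.sqrt_sq (by positivity)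
      rw [show (((3:ℕ):ℝ)/((2:ℕ):ℝ)) = 1 + 1/2 by norm_num,
        Real.rpow_add hBpos, Real.rpow_one, ← Real.sqrt_eq_rpow, hsqrtB]
      clear hder H1 H2 H3 hmono hd0 hBeq hBpos hsqrtB hcdef hcpos
      clear_value c
      clear c
      have hrt2 : Real.sqrt 2 ≤ 2 := by
        nlinarith [Real.sq_sqrt (show (0:ℝ) ≤ 2 by norm_num), Real.sqrt_nonneg 2]
      field_simp
      nlinarith [mul_le_mul_of_nonneg_left (pow_le_pow_right₀ hs1 (show 5 ≤ 6 by norm_num))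
          (pow_nonneg hβ.le 3),
        mul_nonneg (pow_nonneg hβ.le 3) (pow_nonneg hs0.le 5),
        hrt2, Real.sqrt_nonneg 2, pow_nonneg hβ.le 3, pow_nonneg hs0.le 5]
    · rw [show ((3:ℕ):ℝ)/((3:ℕ):ℝ) = 1 by norm_num, Real.rpow_one]
      calc |pderivSK N (skFreeEnergy N β h) q 3 x| ≤ (N:ℝ)⁻¹ * (6 * c ^ 3) := H3
        _ ≤ 13 * β ^ 3 * (s ^ 5)⁻¹ := by
            rw [hcdef, ← hsq]
            field_simp
            nlinarith [mul_nonneg (pow_nonneg hβ.le 3) (pow_nonneg hs0.le 5)]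
end

section
/- Fix β > 0, h ∈ ℝ and N ≥ 2, and let F(x) := N⁻¹ log Σ_{σ∈{−1,1}^N} exp( β N^{-1/2} Σ_{i<j} x_{ij} σᵢσⱼ + β h Σ_{i≤N} σᵢ ). Let 𝒥 and 𝒥′ be collections of independent real random variables (𝒥_{ij})_{1≤i<j≤N}, (𝒥′_{ij})_{1≤i<j≤N}, independent of each other, with zero means, unit variances, and third absolute moments uniformly bounded by γ < ∞. Then for every thrice differentiable g : ℝ → ℝ with bounded first three derivatives, |E g(F(𝒥)) − E g(F(𝒥′))| ≤ 26 C₂(g) β³ γ N^{-1/2}, i.e. the free energies differ by at most a constant (depending on g, β, γ) times N^{-1/2}. -/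
open MeasureTheory ProbabilityTheory

lemma mem_segment_abs_le {t u : ℝ} (hu : u ∈ segment ℝ 0 t) : |u| ≤ |t| := by
  rw [segment_eq_uIcc] at hu
  rcases Set.mem_uIcc.1 hu with ⟨h1, h2⟩ | ⟨h1, h2⟩
  · exact (abs_le.2 ⟨by linarith [abs_nonneg t], by linarith [le_abs_self t]⟩)
  · exact (abs_le.2 ⟨by linarith [neg_abs_le t], by linarith [abs_nonneg t]⟩)

lemma taylor3_bound {f f1 f2 f3 : ℝ → ℝ} {M : ℝ}
    (hf : ∀ u, HasDerivAt f (f1 u) u) (h1 : ∀ u, HasDerivAt f1 (f2 u) u)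
    (h2 : ∀ u, HasDerivAt f2 (f3 u) u) (hM : ∀ u, |f3 u| ≤ M) (t : ℝ) :
    |f t - f 0 - f1 0 * t - f2 0 * t ^ 2 / 2| ≤ M * |t| ^ 3 := by
  have hM0 : 0 ≤ M := le_trans (abs_nonneg _) (hM 0)
  set s : Set ℝ := segment ℝ 0 t with hs
  have hconv : Convex ℝ s := convex_segment 0 t
  have h0s : (0 : ℝ) ∈ s := left_mem_segment ℝ 0 t
  have hts : t ∈ s := right_mem_segment ℝ 0 t
  -- step 1 : |f2 u - f2 0| ≤ M * |t| on s
  have step1 : ∀ u ∈ s, |f2 u - f2 0| ≤ M * |t| := by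
    intro u hu
    have := hconv.norm_image_sub_le_of_norm_hasDerivWithin_le
      (f := f2) (f' := f3) (fun v _ => (h2 v).hasDerivWithinAt)
      (fun v _ => hM v) h0s hu
    calc |f2 u - f2 0| ≤ M * ‖u - 0‖ := this
    _ ≤ M * |t| := by
        rw [sub_zero]
        exact mul_le_mul_of_nonneg_left (mem_segment_abs_le hu) hM0
  -- step 2 : |f1 u - f1 0 - f2 0 * u| ≤ M * |t|^2 on s
  have step2 : ∀ u ∈ s, |f1 u - f1 0 - f2 0 * u| ≤ M * |t| ^ 2 := by
    intro u hu
    have hd : ∀ v, HasDerivAt (fun w => f1 w - f1 0 - f2 0 * w) (f2 v - f2 0) v := by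
      intro v
      exact (((h1 v).sub_const (f1 0)).sub ((hasDerivAt_id v).const_mul (f2 0))).congr_deriv (by ring)
    have := hconv.norm_image_sub_le_of_norm_hasDerivWithin_le
      (f := fun w => f1 w - f1 0 - f2 0 * w) (f' := fun v => f2 v - f2 0)
      (fun v hv => (hd v).hasDerivWithinAt) (fun v hv => step1 v hv) h0s hu
    simp only [mul_zero, sub_zero, Real.norm_eq_abs] at this
    calc |f1 u - f1 0 - f2 0 * u| ≤ M * |t| * |u - 0| := by simpa using this
    _ ≤ M * |t| * |t| := by
        refine mul_le_mul_of_nonneg_left ?_ (by positivity)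
        simpa using mem_segment_abs_le hu
    _ = M * |t| ^ 2 := by ring
  -- step 3
  have hd : ∀ v, HasDerivAt (fun w => f w - f 0 - f1 0 * w - f2 0 * w ^ 2 / 2)
      (f1 v - f1 0 - f2 0 * v) v := by
    intro v
    have h1' : HasDerivAt (fun w : ℝ => f2 0 * w ^ 2 / 2) (f2 0 * v) v := by
      have := ((hasDerivAt_pow 2 v).const_mul (f2 0)).div_const 2
      simpa using this.congr_deriv (by ring)
    exact ((((hf v).sub_const (f 0)).sub ((hasDerivAt_id v).const_mul (f1 0))).sub h1').congr_deriv (by ring)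
  have := hconv.norm_image_sub_le_of_norm_hasDerivWithin_le
    (f := fun w => f w - f 0 - f1 0 * w - f2 0 * w ^ 2 / 2)
    (f' := fun v => f1 v - f1 0 - f2 0 * v)
    (fun v hv => (hd v).hasDerivWithinAt) (fun v hv => step2 v hv) h0s hts
  simp only [mul_zero, sub_zero, Real.norm_eq_abs, ne_eq, OfNat.ofNat_ne_zero,
    not_false_eq_true, zero_pow, zero_div] at this
  calc |f t - f 0 - f1 0 * t - f2 0 * t ^ 2 / 2| ≤ M * |t| ^ 2 * |t - 0| := by simpa using this
  _ = M * |t| ^ 3 := by rw [sub_zero]; ring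

/-- the sign σ_i σ_j -/
def skSgn (N : ℕ) (q : Fin N × Fin N) (s : Fin N → Bool) : ℝ :=
  (if s q.1 then (1 : ℝ) else -1) * (if s q.2 then (1 : ℝ) else -1)

lemma skSgn_sq {N q s} : skSgn N q s * skSgn N q s = 1 := by
  unfold skSgn; rcases s q.1 <;> rcases s q.2 <;> norm_num

lemma abs_skSgn {N q s} : |skSgn N q s| = 1 := by
  unfold skSgn; rcases s q.1 <;> rcases s q.2 <;> norm_num

lemma skEnergy_congr {N : ℕ} {β h : ℝ} {x y : Fin N × Fin N → ℝ}
    (hxy : ∀ q : Fin N × Fin N, q.1 < q.2 → x q = y q) (s : Fin N → Bool) :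
    skEnergy N β h x s = skEnergy N β h y s := by
  unfold skEnergy
  congr 1
  congr 1
  refine Finset.sum_congr rfl fun q hq => ?_
  rw [hxy q (Finset.mem_filter.1 hq).2]

lemma skFreeEnergy_congr {N : ℕ} {β h : ℝ} {x y : Fin N × Fin N → ℝ}
    (hxy : ∀ q : Fin N × Fin N, q.1 < q.2 → x q = y q) :
    skFreeEnergy N β h x = skFreeEnergy N β h y := by
  unfold skFreeEnergy
  have : ∑ s : Fin N → Bool, Real.exp (skEnergy N β h x s)
      = ∑ s : Fin N → Bool, Real.exp (skEnergy N β h y s) :=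
    Finset.sum_congr rfl fun s _ => by rw [skEnergy_congr hxy]
  rw [this]

lemma skEnergy_update {N : ℕ} {β h : ℝ} (x : Fin N × Fin N → ℝ)
    {q : Fin N × Fin N} (hq : q.1 < q.2) (s : Fin N → Bool) (t : ℝ) :
    skEnergy N β h (Function.update x q t) s =
      skEnergy N β h (Function.update x q 0) s + β * (Real.sqrt N)⁻¹ * skSgn N q s * t := by
  have hqmem : q ∈ Finset.univ.filter (fun r : Fin N × Fin N => r.1 < r.2) := by
    simp [hq]
  unfold skEnergy skSgn
  rw [← Finset.add_sum_erase _ _ hqmem, ← Finset.add_sum_erase _ _ hqmem]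
  have he : ∀ u : ℝ, ∀ r ∈ (Finset.univ.filter
      (fun r : Fin N × Fin N => r.1 < r.2)).erase q,
      Function.update x q u r * (if s r.1 then (1:ℝ) else -1) * (if s r.2 then (1:ℝ) else -1)
        = x r * (if s r.1 then (1:ℝ) else -1) * (if s r.2 then (1:ℝ) else -1) := by
    intro u r hr
    rw [Function.update_of_ne (Finset.mem_erase.1 hr).1]
  rw [Finset.sum_congr rfl (he t), Finset.sum_congr rfl (he 0),
    Function.update_self, Function.update_self]
  ring

/-- partition function along coordinate `q` -/
noncomputable def skZ (N : ℕ) (β h : ℝ) (x : Fin N × Fin N → ℝ)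
    (q : Fin N × Fin N) (t : ℝ) : ℝ :=
  ∑ s : Fin N → Bool, Real.exp (skEnergy N β h (Function.update x q t) s)

noncomputable def skZ1 (N : ℕ) (β h : ℝ) (x : Fin N × Fin N → ℝ)
    (q : Fin N × Fin N) (t : ℝ) : ℝ :=
  ∑ s : Fin N → Bool, skSgn N q s * Real.exp (skEnergy N β h (Function.update x q t) s)

noncomputable def skm (N : ℕ) (β h : ℝ) (x : Fin N × Fin N → ℝ)
    (q : Fin N × Fin N) (t : ℝ) : ℝ :=
  skZ1 N β h x q t / skZ N β h x q t

lemma skZ_pos {N : ℕ} (hN : 0 < N) (β h : ℝ) (x : Fin N × Fin N → ℝ)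
    (q : Fin N × Fin N) (t : ℝ) : 0 < skZ N β h x q t := by
  refine Finset.sum_pos (fun s _ => Real.exp_pos _) ?_
  exact Finset.univ_nonempty

lemma abs_skZ1_le {N : ℕ} (β h : ℝ) (x : Fin N × Fin N → ℝ)
    (q : Fin N × Fin N) (t : ℝ) : |skZ1 N β h x q t| ≤ skZ N β h x q t := by
  refine le_trans (Finset.abs_sum_le_sum_abs _ _) ?_
  refine Finset.sum_le_sum fun s _ => ?_
  rw [abs_mul, abs_skSgn, one_mul, abs_of_pos (Real.exp_pos _)]

lemma abs_skm_le {N : ℕ} (hN : 0 < N) (β h : ℝ) (x : Fin N × Fin N → ℝ)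
    (q : Fin N × Fin N) (t : ℝ) : |skm N β h x q t| ≤ 1 := by
  have hZ := skZ_pos hN β h x q t
  rw [skm, abs_div, abs_of_pos hZ, div_le_one hZ]
  exact abs_skZ1_le β h x q t

lemma hasDerivAt_skZ {N : ℕ} {β h : ℝ} (x : Fin N × Fin N → ℝ)
    {q : Fin N × Fin N} (hq : q.1 < q.2) (t : ℝ) :
    HasDerivAt (skZ N β h x q) (β * (Real.sqrt N)⁻¹ * skZ1 N β h x q t) t := by
  have key : ∀ s : Fin N → Bool,
      HasDerivAt (fun u => Real.exp (skEnergy N β h (Function.update x q u) s))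
        (β * (Real.sqrt N)⁻¹ * (skSgn N q s *
          Real.exp (skEnergy N β h (Function.update x q t) s))) t := by
    intro s
    have heq : (fun u => Real.exp (skEnergy N β h (Function.update x q u) s))
        = fun u => Real.exp (skEnergy N β h (Function.update x q 0) s
            + β * (Real.sqrt N)⁻¹ * skSgn N q s * u) :=
      funext fun u => by rw [skEnergy_update x hq]
    rw [heq]
    have h1 : HasDerivAt (fun u : ℝ => skEnergy N β h (Function.update x q 0) s
        + β * (Real.sqrt N)⁻¹ * skSgn N q s * u)
        (β * (Real.sqrt N)⁻¹ * skSgn N q s) t := by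
      simpa using ((hasDerivAt_id t).const_mul
        (β * (Real.sqrt N)⁻¹ * skSgn N q s)).const_add
        (skEnergy N β h (Function.update x q 0) s)
    refine h1.exp.congr_deriv ?_
    rw [skEnergy_update x hq s t]
    ring
  have := HasDerivAt.fun_sum (fun s (_ : s ∈ Finset.univ) => key s)
  rw [skZ1, Finset.mul_sum]
  exact this

lemma hasDerivAt_skZ1 {N : ℕ} {β h : ℝ} (x : Fin N × Fin N → ℝ)
    {q : Fin N × Fin N} (hq : q.1 < q.2) (t : ℝ) :
    HasDerivAt (skZ1 N β h x q) (β * (Real.sqrt N)⁻¹ * skZ N β h x q t) t := by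
  have key : ∀ s : Fin N → Bool,
      HasDerivAt (fun u => skSgn N q s * Real.exp (skEnergy N β h (Function.update x q u) s))
        (β * (Real.sqrt N)⁻¹ *
          Real.exp (skEnergy N β h (Function.update x q t) s)) t := by
    intro s
    have heq : (fun u => skSgn N q s * Real.exp (skEnergy N β h (Function.update x q u) s))
        = fun u => skSgn N q s * Real.exp (skEnergy N β h (Function.update x q 0) s
            + β * (Real.sqrt N)⁻¹ * skSgn N q s * u) :=
      funext fun u => by rw [skEnergy_update x hq]
    rw [heq]
    have h1 : HasDerivAt (fun u : ℝ => skEnergy N β h (Function.update x q 0) s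
        + β * (Real.sqrt N)⁻¹ * skSgn N q s * u)
        (β * (Real.sqrt N)⁻¹ * skSgn N q s) t := by
      simpa using ((hasDerivAt_id t).const_mul
        (β * (Real.sqrt N)⁻¹ * skSgn N q s)).const_add
        (skEnergy N β h (Function.update x q 0) s)
    refine ((h1.exp).const_mul (skSgn N q s)).congr_deriv ?_
    rw [skEnergy_update x hq s t]
    simp only [skSgn]
    rcases s q.1 <;> rcases s q.2 <;> simp <;> ring
  have := HasDerivAt.fun_sum (fun s (_ : s ∈ Finset.univ) => key s)
  rw [skZ, Finset.mul_sum]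
  exact this

lemma hasDerivAt_skm {N : ℕ} (hN : 0 < N) {β h : ℝ} (x : Fin N × Fin N → ℝ)
    {q : Fin N × Fin N} (hq : q.1 < q.2) (t : ℝ) :
    HasDerivAt (skm N β h x q)
      (β * (Real.sqrt N)⁻¹ * (1 - skm N β h x q t ^ 2)) t := by
  have hZ := skZ_pos hN β h x q t
  have hd := HasDerivAt.div (hasDerivAt_skZ1 (β := β) (h := h) x hq t)
    (hasDerivAt_skZ (β := β) (h := h) x hq t) (ne_of_gt hZ)
  refine hd.congr_deriv ?_
  simp only [skm]
  field_simp

lemma hasDerivAt_skF {N : ℕ} (hN : 0 < N) {β h : ℝ} (x : Fin N × Fin N → ℝ)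
    {q : Fin N × Fin N} (hq : q.1 < q.2) (t : ℝ) :
    HasDerivAt (fun u => skFreeEnergy N β h (Function.update x q u))
      ((N : ℝ)⁻¹ * (β * (Real.sqrt N)⁻¹) * skm N β h x q t) t := by
  have hZ := skZ_pos hN β h x q t
  have heq : (fun u => skFreeEnergy N β h (Function.update x q u))
      = fun u => (N : ℝ)⁻¹ * Real.log (skZ N β h x q u) := rfl
  rw [heq]
  have hd := ((hasDerivAt_skZ (β := β) (h := h) x hq t).log (ne_of_gt hZ)).const_mul ((N : ℝ)⁻¹)
  refine hd.congr_deriv ?_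
  rw [skm]
  ring

noncomputable def skA1 (g : ℝ → ℝ) (N : ℕ) (β h : ℝ) (x : Fin N × Fin N → ℝ)
    (q : Fin N × Fin N) : ℝ :=
  deriv g (skFreeEnergy N β h (Function.update x q 0)) *
    ((N : ℝ)⁻¹ * (β * (Real.sqrt N)⁻¹) * skm N β h x q 0)

noncomputable def skA2 (g : ℝ → ℝ) (N : ℕ) (β h : ℝ) (x : Fin N × Fin N → ℝ)
    (q : Fin N × Fin N) : ℝ :=
  iteratedDeriv 2 g (skFreeEnergy N β h (Function.update x q 0)) *
      ((N : ℝ)⁻¹ * (β * (Real.sqrt N)⁻¹) * skm N β h x q 0) ^ 2 +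
    deriv g (skFreeEnergy N β h (Function.update x q 0)) *
      ((N : ℝ)⁻¹ * (β * (Real.sqrt N)⁻¹) ^ 2 * (1 - skm N β h x q 0 ^ 2))

set_option maxHeartbeats 1000000 in
lemma sk_taylor {N : ℕ} (hN : 2 ≤ N) {β : ℝ} (h : ℝ) (hβ : 0 < β)
    {g : ℝ → ℝ} (hg : ∀ p < 3, Differentiable ℝ (iteratedDeriv p g))
    {B1 B2 B3 : ℝ} (hB1 : ∀ t, |deriv g t| ≤ B1) (hB2 : ∀ t, |iteratedDeriv 2 g t| ≤ B2)
    (hB3 : ∀ t, |iteratedDeriv 3 g t| ≤ B3)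
    (x : Fin N × Fin N → ℝ) {q : Fin N × Fin N} (hq : q.1 < q.2) (t : ℝ) :
    |g (skFreeEnergy N β h (Function.update x q t)) -
        g (skFreeEnergy N β h (Function.update x q 0)) -
        skA1 g N β h x q * t - skA2 g N β h x q * t ^ 2 / 2| ≤
      (2 * B1 + 3 * B2 + B3) * (β * (Real.sqrt N)⁻¹) ^ 3 * (N : ℝ)⁻¹ * |t| ^ 3 := by
  have hN0 : 0 < N := by omega
  have hNR : (0 : ℝ) < N := by exact_mod_cast hN0
  set c : ℝ := β * (Real.sqrt N)⁻¹ with hc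
  have hc0 : 0 < c := by
    have : 0 < Real.sqrt N := Real.sqrt_pos.2 hNR
    positivity
  have hNinv : (N : ℝ)⁻¹ ≤ 1 := by
    rw [inv_le_one_iff₀]; right; exact_mod_cast hN0
  have hNinv0 : 0 < (N : ℝ)⁻¹ := by positivity
  -- differentiability of g and its derivatives
  have hgd : Differentiable ℝ g := by have := hg 0 (by norm_num); rwa [iteratedDeriv_zero] at this
  have hgd1 : Differentiable ℝ (deriv g) := by
    have := hg 1 (by norm_num); rwa [iteratedDeriv_one] at this
  have hgd2 : Differentiable ℝ (iteratedDeriv 2 g) := hg 2 (by norm_num)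
  have hD1 : ∀ y, HasDerivAt g (deriv g y) y := fun y => (hgd y).hasDerivAt
  have hD2 : ∀ y, HasDerivAt (deriv g) (iteratedDeriv 2 g y) y := by
    intro y
    have h1 := (hgd1 y).hasDerivAt
    have h2 : iteratedDeriv 2 g = deriv (deriv g) := by
      rw [iteratedDeriv_succ, iteratedDeriv_one]
    rw [h2]; exact h1
  have hD3 : ∀ y, HasDerivAt (iteratedDeriv 2 g) (iteratedDeriv 3 g y) y := by
    intro y
    have h1 := (hgd2 y).hasDerivAt
    have h2 : iteratedDeriv 3 g = deriv (iteratedDeriv 2 g) := by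
      rw [iteratedDeriv_succ]
    rw [h2]; exact h1
  -- the one-dimensional functions
  set F : ℝ → ℝ := fun u => skFreeEnergy N β h (Function.update x q u) with hF
  set m : ℝ → ℝ := fun u => skm N β h x q u with hm
  set f1 : ℝ → ℝ := fun u => (N : ℝ)⁻¹ * c * m u with hf1
  set f2 : ℝ → ℝ := fun u => (N : ℝ)⁻¹ * c ^ 2 * (1 - m u ^ 2) with hf2
  set f3 : ℝ → ℝ := fun u => -2 * (N : ℝ)⁻¹ * c ^ 3 * m u * (1 - m u ^ 2) with hf3
  have hmb : ∀ u, |m u| ≤ 1 := fun u => abs_skm_le hN0 β h x q u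
  have hFd : ∀ u, HasDerivAt F (f1 u) u := by
    intro u
    have := hasDerivAt_skF (β := β) (h := h) hN0 x hq u
    exact this.congr_deriv (by rw [hf1] <;> ring)
  have hmd : ∀ u, HasDerivAt m (c * (1 - m u ^ 2)) u := fun u => hasDerivAt_skm hN0 x hq u
  have hf1d : ∀ u, HasDerivAt f1 (f2 u) u := by
    intro u
    exact ((hmd u).const_mul ((N : ℝ)⁻¹ * c)).congr_deriv (by rw [hf2] <;> ring)
  have hf2d : ∀ u, HasDerivAt f2 (f3 u) u := by
    intro u
    have hsq : HasDerivAt (fun w => 1 - m w ^ 2) (-(2 * m u * (c * (1 - m u ^ 2)))) u := by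
      simpa using (((hmd u).pow 2).const_sub 1).congr_deriv (by ring)
    exact (hsq.const_mul ((N : ℝ)⁻¹ * c ^ 2)).congr_deriv (by rw [hf3] <;> ring)
  -- ψ and its derivatives
  set ψ1 : ℝ → ℝ := fun u => deriv g (F u) * f1 u with hψ1
  set ψ2 : ℝ → ℝ := fun u => iteratedDeriv 2 g (F u) * f1 u ^ 2 + deriv g (F u) * f2 u with hψ2
  set ψ3 : ℝ → ℝ := fun u => iteratedDeriv 3 g (F u) * f1 u ^ 3 +
      3 * iteratedDeriv 2 g (F u) * f1 u * f2 u + deriv g (F u) * f3 u with hψ3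
  have hψd : ∀ u, HasDerivAt (fun w => g (F w)) (ψ1 u) u := by
    intro u
    exact ((hD1 (F u)).comp u (hFd u)).congr_deriv (by rw [hψ1] <;> ring)
  have hψ1d : ∀ u, HasDerivAt ψ1 (ψ2 u) u := by
    intro u
    have := (((hD2 (F u)).comp u (hFd u)).mul (hf1d u))
    exact this.congr_deriv (by simp only [Function.comp_apply]; rw [hψ2] <;> ring)
  have hψ2d : ∀ u, HasDerivAt ψ2 (ψ3 u) u := by
    intro u
    have h1 := (((hD3 (F u)).comp u (hFd u)).mul ((hf1d u).pow 2))
    have h2 := (((hD2 (F u)).comp u (hFd u)).mul (hf2d u))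
    exact (h1.add h2).congr_deriv
      (by simp only [Function.comp_apply, Pi.pow_apply]; rw [hψ3] <;> push_cast <;> ring)
  -- bound on ψ3
  have hbound : ∀ u, |ψ3 u| ≤ (2 * B1 + 3 * B2 + B3) * c ^ 3 * (N : ℝ)⁻¹ := by
    intro u
    have hB10 : 0 ≤ B1 := le_trans (abs_nonneg _) (hB1 0)
    have hB20 : 0 ≤ B2 := le_trans (abs_nonneg _) (hB2 0)
    have hB30 : 0 ≤ B3 := le_trans (abs_nonneg _) (hB3 0)
    have hmsq : 0 ≤ 1 - m u ^ 2 := by nlinarith [hmb u, abs_nonneg (m u), sq_abs (m u)]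
    have hmsq1 : 1 - m u ^ 2 ≤ 1 := by nlinarith [sq_nonneg (m u)]
    have h1 : |f1 u| ≤ (N : ℝ)⁻¹ * c := by
      rw [hf1]
      calc |(N : ℝ)⁻¹ * c * m u| = (N : ℝ)⁻¹ * c * |m u| := by
            rw [abs_mul, abs_of_pos (by positivity : (0:ℝ) < (N : ℝ)⁻¹ * c)]
      _ ≤ (N : ℝ)⁻¹ * c * 1 := by
            exact mul_le_mul_of_nonneg_left (hmb u) (by positivity)
      _ = (N : ℝ)⁻¹ * c := by ring
    have h2 : |f2 u| ≤ (N : ℝ)⁻¹ * c ^ 2 := by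
      rw [hf2]
      rw [abs_mul, abs_of_pos (by positivity : (0:ℝ) < (N : ℝ)⁻¹ * c ^ 2),
        abs_of_nonneg hmsq]
      have hpos : (0:ℝ) ≤ (N : ℝ)⁻¹ * c ^ 2 := by positivity
      have := mul_le_mul_of_nonneg_left hmsq1 hpos
      linarith
    have h3 : |f3 u| ≤ 2 * (N : ℝ)⁻¹ * c ^ 3 := by
      rw [hf3]
      have habs : |(-2 : ℝ) * (N : ℝ)⁻¹ * c ^ 3 * m u * (1 - m u ^ 2)| =
          2 * (N : ℝ)⁻¹ * c ^ 3 * |m u| * |1 - m u ^ 2| := by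
        rw [abs_mul, abs_mul, abs_mul, abs_mul,
          (by norm_num : |(-2:ℝ)| = 2), abs_of_pos hNinv0, abs_of_pos (pow_pos hc0 3)]
      rw [habs, abs_of_nonneg hmsq]
      have hpos : (0:ℝ) ≤ 2 * (N : ℝ)⁻¹ * c ^ 3 := by positivity
      have h4 : |m u| * (1 - m u ^ 2) ≤ 1 :=
        mul_le_one₀ (hmb u) hmsq hmsq1
      have := mul_le_mul_of_nonneg_left h4 hpos
      nlinarith
    have t1 : |iteratedDeriv 3 g (F u) * f1 u ^ 3| ≤ B3 * ((N : ℝ)⁻¹ * c) ^ 3 := by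
      rw [abs_mul, abs_pow]
      exact mul_le_mul (hB3 _) (pow_le_pow_left₀ (abs_nonneg _) h1 3)
        (by positivity) hB30
    have t2 : |3 * iteratedDeriv 2 g (F u) * f1 u * f2 u| ≤
        3 * B2 * ((N : ℝ)⁻¹ * c) * ((N : ℝ)⁻¹ * c ^ 2) := by
      rw [abs_mul, abs_mul, abs_mul, (by norm_num : |(3:ℝ)| = 3)]
      gcongr <;> first | exact hB2 _ | exact h1 | exact h2 | positivity
    have t3 : |deriv g (F u) * f3 u| ≤ B1 * (2 * (N : ℝ)⁻¹ * c ^ 3) := by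
      rw [abs_mul]
      exact mul_le_mul (hB1 _) h3 (abs_nonneg _) hB10
    calc |ψ3 u| ≤ |iteratedDeriv 3 g (F u) * f1 u ^ 3| +
        |3 * iteratedDeriv 2 g (F u) * f1 u * f2 u| + |deriv g (F u) * f3 u| := by
          rw [hψ3]
          exact le_trans (abs_add_le _ _) (add_le_add_left (abs_add_le _ _) _)
    _ ≤ B3 * ((N : ℝ)⁻¹ * c) ^ 3 + 3 * B2 * ((N : ℝ)⁻¹ * c) * ((N : ℝ)⁻¹ * c ^ 2) +
        B1 * (2 * (N : ℝ)⁻¹ * c ^ 3) := add_le_add (add_le_add t1 t2) t3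
    _ = (B3 * (N : ℝ)⁻¹ ^ 2 + 3 * B2 * (N : ℝ)⁻¹ + 2 * B1) * c ^ 3 * (N : ℝ)⁻¹ := by
          ring
    _ ≤ (2 * B1 + 3 * B2 + B3) * c ^ 3 * (N : ℝ)⁻¹ := by
          have i1 : (N : ℝ)⁻¹ ^ 2 ≤ 1 := by nlinarith [hNinv, hNinv0]
          have hXY : B3 * (N : ℝ)⁻¹ ^ 2 + 3 * B2 * (N : ℝ)⁻¹ + 2 * B1 ≤
              2 * B1 + 3 * B2 + B3 := by
            nlinarith [mul_le_mul_of_nonneg_left i1 hB30,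
              mul_le_mul_of_nonneg_left hNinv hB20]
          have hpos : (0:ℝ) ≤ c ^ 3 * (N : ℝ)⁻¹ := by positivity
          nlinarith [mul_le_mul_of_nonneg_right hXY hpos]
  -- apply Taylor
  have htay := taylor3_bound hψd hψ1d hψ2d hbound t
  have e1 : ψ1 0 = skA1 g N β h x q := by
    simp only [hψ1, hf1, hm, hF, hc, skA1]
  have e2 : ψ2 0 = skA2 g N β h x q := by
    simp only [hψ2, hf1, hf2, hm, hF, hc, skA2]
  rw [e1, e2] at htay
  simp only [hF] at htay
  exact htay

section Meas
variable {Ω : Type} [MeasurableSpace Ω] {N : ℕ} {β h : ℝ}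

lemma measurable_comp_skEnergy {Y : Ω → Fin N × Fin N → ℝ}
    (hY : ∀ r : Fin N × Fin N, r.1 < r.2 → Measurable fun ω => Y ω r) (s : Fin N → Bool) :
    Measurable fun ω => skEnergy N β h (Y ω) s := by
  unfold skEnergy
  refine Measurable.add ?_ measurable_const
  refine Measurable.const_mul ?_ _
  refine Finset.measurable_sum _ fun r hr => ?_
  exact ((hY r (Finset.mem_filter.1 hr).2).mul_const _).mul_const _

lemma measurable_comp_skF {Y : Ω → Fin N × Fin N → ℝ}
    (hY : ∀ r : Fin N × Fin N, r.1 < r.2 → Measurable fun ω => Y ω r) :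
    Measurable fun ω => skFreeEnergy N β h (Y ω) := by
  unfold skFreeEnergy
  refine Measurable.const_mul ?_ _
  refine Measurable.log ?_
  exact Finset.measurable_sum _ fun s _ => (measurable_comp_skEnergy hY s).exp

lemma measurable_update_coord {Y : Ω → Fin N × Fin N → ℝ}
    (hY : ∀ r : Fin N × Fin N, r.1 < r.2 → Measurable fun ω => Y ω r)
    (q : Fin N × Fin N) :
    ∀ r : Fin N × Fin N, r.1 < r.2 →
      Measurable fun ω => Function.update (Y ω) q (0:ℝ) r := by
  intro r hr
  by_cases hrq : r = q
  · subst hrq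
    simp only [Function.update_self]
    exact measurable_const
  · simp only [Function.update_of_ne hrq]
    exact hY r hr

lemma measurable_comp_skm {Y : Ω → Fin N × Fin N → ℝ}
    (hY : ∀ r : Fin N × Fin N, r.1 < r.2 → Measurable fun ω => Y ω r)
    (q : Fin N × Fin N) :
    Measurable fun ω => skm N β h (Y ω) q 0 := by
  unfold skm skZ skZ1
  have hE : ∀ s : Fin N → Bool,
      Measurable fun ω => skEnergy N β h (Function.update (Y ω) q 0) s := fun s =>
    measurable_comp_skEnergy (measurable_update_coord hY q) s
  exact Measurable.div
    (Finset.measurable_sum _ fun s _ => ((hE s).exp).const_mul _)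
    (Finset.measurable_sum _ fun s _ => (hE s).exp)

lemma measurable_comp_skF0 {Y : Ω → Fin N × Fin N → ℝ}
    (hY : ∀ r : Fin N × Fin N, r.1 < r.2 → Measurable fun ω => Y ω r)
    (q : Fin N × Fin N) :
    Measurable fun ω => skFreeEnergy N β h (Function.update (Y ω) q 0) :=
  measurable_comp_skF (measurable_update_coord hY q)

lemma measurable_comp_skA1 {Y : Ω → Fin N × Fin N → ℝ}
    (hY : ∀ r : Fin N × Fin N, r.1 < r.2 → Measurable fun ω => Y ω r)
    (q : Fin N × Fin N) {g : ℝ → ℝ} (hgc : Continuous (deriv g)) :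
    Measurable fun ω => skA1 g N β h (Y ω) q := by
  unfold skA1
  exact (hgc.measurable.comp (measurable_comp_skF0 hY q)).mul
    ((measurable_comp_skm hY q).const_mul _)

lemma measurable_comp_skA2 {Y : Ω → Fin N × Fin N → ℝ}
    (hY : ∀ r : Fin N × Fin N, r.1 < r.2 → Measurable fun ω => Y ω r)
    (q : Fin N × Fin N) {g : ℝ → ℝ} (hgc : Continuous (deriv g))
    (hgc2 : Continuous (iteratedDeriv 2 g)) :
    Measurable fun ω => skA2 g N β h (Y ω) q := by
  unfold skA2
  refine Measurable.add ?_ ?_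
  · exact (hgc2.measurable.comp (measurable_comp_skF0 hY q)).mul
      (((measurable_comp_skm hY q).const_mul _).pow_const 2)
  · refine (hgc.measurable.comp (measurable_comp_skF0 hY q)).mul ?_
    exact (((measurable_comp_skm hY q).pow_const 2).const_sub 1).const_mul _

end Meas

lemma abs_skA1_le {N : ℕ} (hN0 : 0 < N) {β h : ℝ} {g : ℝ → ℝ} {B1 : ℝ}
    (hB1 : ∀ t, |deriv g t| ≤ B1) (x : Fin N × Fin N → ℝ) (q : Fin N × Fin N) :
    |skA1 g N β h x q| ≤ B1 * ((N : ℝ)⁻¹ * |β| * (Real.sqrt N)⁻¹) := by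
  have hs : 0 < Real.sqrt N := Real.sqrt_pos.2 (by exact_mod_cast hN0)
  have hNinv0 : (0:ℝ) < (N : ℝ)⁻¹ := by
    have : (0:ℝ) < N := by exact_mod_cast hN0
    positivity
  unfold skA1
  rw [abs_mul]
  refine mul_le_mul (hB1 _) ?_ (abs_nonneg _) (le_trans (abs_nonneg _) (hB1 0))
  rw [abs_mul]
  have h1 : |(N : ℝ)⁻¹ * (β * (Real.sqrt N)⁻¹)| = (N : ℝ)⁻¹ * |β| * (Real.sqrt N)⁻¹ := by
    rw [abs_mul, abs_mul, abs_of_pos hNinv0, abs_of_pos (inv_pos.2 hs)]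
    ring
  rw [h1]
  calc (N : ℝ)⁻¹ * |β| * (Real.sqrt N)⁻¹ * |skm N β h x q 0| ≤
      (N : ℝ)⁻¹ * |β| * (Real.sqrt N)⁻¹ * 1 := by
        exact mul_le_mul_of_nonneg_left (abs_skm_le hN0 β h x q 0) (by positivity)
  _ = (N : ℝ)⁻¹ * |β| * (Real.sqrt N)⁻¹ := by ring

lemma abs_skA2_le {N : ℕ} (hN0 : 0 < N) {β h : ℝ} {g : ℝ → ℝ} {B1 B2 : ℝ}
    (hB1 : ∀ t, |deriv g t| ≤ B1) (hB2 : ∀ t, |iteratedDeriv 2 g t| ≤ B2)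
    (x : Fin N × Fin N → ℝ) (q : Fin N × Fin N) :
    |skA2 g N β h x q| ≤ B2 * ((N : ℝ)⁻¹ * |β| * (Real.sqrt N)⁻¹) ^ 2 +
      B1 * ((N : ℝ)⁻¹ * β ^ 2 * ((Real.sqrt N)⁻¹) ^ 2) := by
  have hs : 0 < Real.sqrt N := Real.sqrt_pos.2 (by exact_mod_cast hN0)
  have hNinv0 : (0:ℝ) < (N : ℝ)⁻¹ := by
    have : (0:ℝ) < N := by exact_mod_cast hN0
    positivity
  have hm := abs_skm_le hN0 β h x q 0
  have hmsq : 0 ≤ 1 - skm N β h x q 0 ^ 2 := by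
    nlinarith [abs_nonneg (skm N β h x q 0), sq_abs (skm N β h x q 0)]
  have hmsq1 : 1 - skm N β h x q 0 ^ 2 ≤ 1 := by nlinarith [sq_nonneg (skm N β h x q 0)]
  unfold skA2
  refine le_trans (abs_add_le _ _) (add_le_add ?_ ?_)
  · rw [abs_mul, abs_pow]
    refine mul_le_mul (hB2 _) ?_ (by positivity) (le_trans (abs_nonneg _) (hB2 0))
    refine pow_le_pow_left₀ (abs_nonneg _) ?_ 2
    rw [abs_mul, abs_mul, abs_mul, abs_of_pos hNinv0, abs_of_pos (inv_pos.2 hs)]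
    calc (N : ℝ)⁻¹ * (|β| * (Real.sqrt N)⁻¹) * |skm N β h x q 0| ≤
        (N : ℝ)⁻¹ * (|β| * (Real.sqrt N)⁻¹) * 1 :=
          mul_le_mul_of_nonneg_left hm (by positivity)
    _ = (N : ℝ)⁻¹ * |β| * (Real.sqrt N)⁻¹ := by ring
  · rw [abs_mul]
    refine mul_le_mul (hB1 _) ?_ (abs_nonneg _) (le_trans (abs_nonneg _) (hB1 0))
    have : |(N : ℝ)⁻¹ * (β * (Real.sqrt N)⁻¹) ^ 2 * (1 - skm N β h x q 0 ^ 2)|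
        = (N : ℝ)⁻¹ * (β * (Real.sqrt N)⁻¹) ^ 2 * (1 - skm N β h x q 0 ^ 2) := by
      refine abs_of_nonneg ?_
      have : (0:ℝ) ≤ (N : ℝ)⁻¹ * (β * (Real.sqrt N)⁻¹) ^ 2 := by positivity
      exact mul_nonneg this hmsq
    rw [this]
    calc (N : ℝ)⁻¹ * (β * (Real.sqrt N)⁻¹) ^ 2 * (1 - skm N β h x q 0 ^ 2) ≤
        (N : ℝ)⁻¹ * (β * (Real.sqrt N)⁻¹) ^ 2 * 1 :=
          mul_le_mul_of_nonneg_left hmsq1 (by positivity)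
    _ = (N : ℝ)⁻¹ * β ^ 2 * ((Real.sqrt N)⁻¹) ^ 2 := by ring

lemma skA1_congr {N : ℕ} {β h : ℝ} (g : ℝ → ℝ) {x x' : Fin N × Fin N → ℝ}
    {q : Fin N × Fin N} (hxx : Function.update x q (0:ℝ) = Function.update x' q 0) :
    skA1 g N β h x q = skA1 g N β h x' q := by
  unfold skA1 skm skZ skZ1
  rw [hxx]

lemma skA2_congr {N : ℕ} {β h : ℝ} (g : ℝ → ℝ) {x x' : Fin N × Fin N → ℝ}
    {q : Fin N × Fin N} (hxx : Function.update x q (0:ℝ) = Function.update x' q 0) :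
    skA2 g N β h x q = skA2 g N β h x' q := by
  unfold skA2 skm skZ skZ1
  rw [hxx]

lemma abs_skF_le {N : ℕ} (hN0 : 0 < N) (β h : ℝ) (x : Fin N × Fin N → ℝ) :
    |skFreeEnergy N β h x| ≤ Real.log 2 + |β * h| +
      |β| * (Real.sqrt N)⁻¹ * (N : ℝ)⁻¹ *
        ∑ r ∈ Finset.univ.filter (fun r : Fin N × Fin N => r.1 < r.2), |x r| := by
  have hNR : (0:ℝ) < N := by exact_mod_cast hN0
  have hs : 0 < Real.sqrt N := Real.sqrt_pos.2 hNR
  set Sx : ℝ := ∑ r ∈ Finset.univ.filter (fun r : Fin N × Fin N => r.1 < r.2), |x r|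
    with hSx
  have hSx0 : 0 ≤ Sx := Finset.sum_nonneg fun r _ => abs_nonneg _
  set U : ℝ := |β| * (Real.sqrt N)⁻¹ * Sx + |β * h| * N with hU
  have hU0 : 0 ≤ U := by positivity
  have hE : ∀ s : Fin N → Bool, |skEnergy N β h x s| ≤ U := by
    intro s
    unfold skEnergy
    refine le_trans (abs_add_le _ _) ?_
    rw [hU]
    refine add_le_add ?_ ?_
    · rw [abs_mul, abs_mul, abs_of_pos (inv_pos.2 hs)]
      refine mul_le_mul_of_nonneg_left ?_ (by positivity)
      refine le_trans (Finset.abs_sum_le_sum_abs _ _) (le_of_eq ?_)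
      refine Finset.sum_congr rfl fun r _ => ?_
      rw [abs_mul, abs_mul]
      rcases s r.1 <;> rcases s r.2 <;> simp
    · rw [abs_mul]
      refine mul_le_mul_of_nonneg_left ?_ (abs_nonneg _)
      refine le_trans (Finset.abs_sum_le_sum_abs _ _) ?_
      have : ∀ i : Fin N, |if s i then (1:ℝ) else -1| = 1 := by
        intro i; rcases s i <;> simp
      rw [Finset.sum_congr rfl fun i _ => this i]
      simp
  set Z : ℝ := ∑ s : Fin N → Bool, Real.exp (skEnergy N β h x s) with hZ
  have hZpos : 0 < Z := Finset.sum_pos (fun s _ => Real.exp_pos _) Finset.univ_nonempty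
  have hupper : Z ≤ (2 : ℝ) ^ N * Real.exp U := by
    rw [hZ]
    calc ∑ s : Fin N → Bool, Real.exp (skEnergy N β h x s) ≤
        ∑ _s : Fin N → Bool, Real.exp U :=
          Finset.sum_le_sum fun s _ => Real.exp_le_exp.2 (le_of_abs_le (hE s))
    _ = (2 : ℝ) ^ N * Real.exp U := by
        rw [Finset.sum_const, Finset.card_univ]
        simp [Fintype.card_fun]
  have hlower : Real.exp (-U) ≤ Z := by
    have h1 : Real.exp (-U) ≤ Real.exp (skEnergy N β h x (fun _ => true)) := by
      refine Real.exp_le_exp.2 ?_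
      have := hE (fun _ => true)
      linarith [neg_abs_le (skEnergy N β h x (fun _ => true))]
    refine le_trans h1 ?_
    exact Finset.single_le_sum (fun s _ => le_of_lt (Real.exp_pos _)) (Finset.mem_univ _)
  have hlog_up : Real.log Z ≤ N * Real.log 2 + U := by
    refine le_trans (Real.log_le_log hZpos hupper) ?_
    rw [Real.log_mul (by positivity) (Real.exp_ne_zero _), Real.log_pow, Real.log_exp]
  have hlog_lo : -U ≤ Real.log Z := by
    have := Real.log_le_log (Real.exp_pos _) hlower
    rwa [Real.log_exp] at this
  have habs : |Real.log Z| ≤ N * Real.log 2 + U := by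
    rw [abs_le]
    constructor
    · have h2 : (0:ℝ) ≤ N * Real.log 2 := by
        have := Real.log_nonneg (by norm_num : (1:ℝ) ≤ 2)
        positivity
      linarith
    · exact hlog_up
  have : |skFreeEnergy N β h x| = (N : ℝ)⁻¹ * |Real.log Z| := by
    unfold skFreeEnergy
    rw [abs_mul, abs_of_pos (inv_pos.2 hNR)]
  rw [this]
  calc (N : ℝ)⁻¹ * |Real.log Z| ≤ (N : ℝ)⁻¹ * (N * Real.log 2 + U) :=
        mul_le_mul_of_nonneg_left habs (by positivity)
  _ = Real.log 2 + |β * h| + |β| * (Real.sqrt N)⁻¹ * (N : ℝ)⁻¹ * Sx := by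
      rw [hU]
      field_simp
      ring

lemma abs_g_comp_skF_le {N : ℕ} (hN0 : 0 < N) (β h : ℝ) {g : ℝ → ℝ} {B1 : ℝ}
    (hgd : Differentiable ℝ g) (hB1 : ∀ t, |deriv g t| ≤ B1) (x : Fin N × Fin N → ℝ) :
    |g (skFreeEnergy N β h x)| ≤
      |g 0| + B1 * (Real.log 2 + |β * h|) +
        B1 * |β| * (Real.sqrt N)⁻¹ * (N : ℝ)⁻¹ *
          ∑ r ∈ Finset.univ.filter (fun r : Fin N × Fin N => r.1 < r.2), |x r| := by
  have hB10 : 0 ≤ B1 := le_trans (abs_nonneg _) (hB1 0)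
  have hlip : ∀ y : ℝ, |g y - g 0| ≤ B1 * |y| := by
    intro y
    have := convex_univ.norm_image_sub_le_of_norm_hasDerivWithin_le
      (f := g) (f' := deriv g)
      (fun v _ => ((hgd v).hasDerivAt).hasDerivWithinAt)
      (fun v _ => hB1 v) (Set.mem_univ 0) (Set.mem_univ y)
    simpa using this
  have h1 : |g (skFreeEnergy N β h x)| ≤ |g 0| + B1 * |skFreeEnergy N β h x| := by
    have := hlip (skFreeEnergy N β h x)
    calc |g (skFreeEnergy N β h x)| ≤
        |g (skFreeEnergy N β h x) - g 0| + |g 0| := by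
          have := abs_sub_abs_le_abs_sub (g (skFreeEnergy N β h x)) (g 0)
          have h2 := abs_add_le (g (skFreeEnergy N β h x) - g 0) (g 0)
          simpa using h2
    _ ≤ |g 0| + B1 * |skFreeEnergy N β h x| := by linarith
  refine le_trans h1 ?_
  have h2 := abs_skF_le hN0 β h x
  have h3 := mul_le_mul_of_nonneg_left h2 hB10
  have hs : 0 < Real.sqrt N := Real.sqrt_pos.2 (by exact_mod_cast hN0)
  nlinarith [h3]

noncomputable def skX {Ω : Type} (N : ℕ) (J J' : Fin N × Fin N → Ω → ℝ)
    (S : Finset (Fin N × Fin N)) (ω : Ω) : Fin N × Fin N → ℝ :=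
  fun r => if r ∈ S then J' r ω else if r.1 < r.2 then J r ω else 0

lemma skX_coord_meas {Ω : Type} [MeasurableSpace Ω] {N : ℕ}
    {J J' : Fin N × Fin N → Ω → ℝ}
    (hJmeas : ∀ q : Fin N × Fin N, q.1 < q.2 → Measurable (J q))
    (hJ'meas : ∀ q : Fin N × Fin N, q.1 < q.2 → Measurable (J' q))
    (S : Finset (Fin N × Fin N)) :
    ∀ r : Fin N × Fin N, r.1 < r.2 → Measurable fun ω => skX N J J' S ω r := by
  intro r hr
  unfold skX
  by_cases hrS : r ∈ S
  · simpa [hrS] using hJ'meas r hr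
  · simpa [hrS, hr] using hJmeas r hr

set_option maxHeartbeats 4000000 in
lemma sk_swap
    {Ω : Type} [MeasurableSpace Ω] {μ : Measure Ω} [IsProbabilityMeasure μ]
    {N : ℕ} (hN : 2 ≤ N) (β h : ℝ) (hβ : 0 < β)
    (J J' : Fin N × Fin N → Ω → ℝ)
    (hJmeas : ∀ q : Fin N × Fin N, q.1 < q.2 → Measurable (J q))
    (hJ'meas : ∀ q : Fin N × Fin N, q.1 < q.2 → Measurable (J' q))
    (hindep : iIndepFun
      (Sum.elim (fun q : {q : Fin N × Fin N // q.1 < q.2} => J q.1)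
        (fun q : {q : Fin N × Fin N // q.1 < q.2} => J' q.1)) μ)
    (hJmean : ∀ q : Fin N × Fin N, q.1 < q.2 → ∫ ω, J q ω ∂μ = 0)
    (hJ'mean : ∀ q : Fin N × Fin N, q.1 < q.2 → ∫ ω, J' q ω ∂μ = 0)
    (hJvar : ∀ q : Fin N × Fin N, q.1 < q.2 → ∫ ω, (J q ω) ^ 2 ∂μ = 1)
    (hJ'var : ∀ q : Fin N × Fin N, q.1 < q.2 → ∫ ω, (J' q ω) ^ 2 ∂μ = 1)
    (γ : ℝ)
    (hJ3 : ∀ q : Fin N × Fin N, q.1 < q.2 → MemLp (J q) 3 μ)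
    (hJ'3 : ∀ q : Fin N × Fin N, q.1 < q.2 → MemLp (J' q) 3 μ)
    (hγJ : ∀ q : Fin N × Fin N, q.1 < q.2 → ∫ ω, |J q ω| ^ 3 ∂μ ≤ γ)
    (hγJ' : ∀ q : Fin N × Fin N, q.1 < q.2 → ∫ ω, |J' q ω| ^ 3 ∂μ ≤ γ)
    (g : ℝ → ℝ) (hg : ∀ p < 3, Differentiable ℝ (iteratedDeriv p g))
    (B1 B2 B3 : ℝ)
    (hB1 : ∀ t, |deriv g t| ≤ B1)
    (hB2 : ∀ t, |iteratedDeriv 2 g t| ≤ B2)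
    (hB3 : ∀ t, |iteratedDeriv 3 g t| ≤ B3)
    (S : Finset (Fin N × Fin N)) (hS : ∀ r ∈ S, r.1 < r.2)
    {q : Fin N × Fin N} (hq : q.1 < q.2) (hqS : q ∉ S) :
    |(∫ ω, g (skFreeEnergy N β h (skX N J J' (insert q S) ω)) ∂μ) -
        ∫ ω, g (skFreeEnergy N β h (skX N J J' S ω)) ∂μ| ≤
      2 * ((2 * B1 + 3 * B2 + B3) * (β * (Real.sqrt N)⁻¹) ^ 3 * (N : ℝ)⁻¹) * γ := by
  classical
  have hN0 : 0 < N := by omega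
  have hNR : (0:ℝ) < N := by exact_mod_cast hN0
  have hsqrt : 0 < Real.sqrt N := Real.sqrt_pos.2 hNR
  have hB10 : 0 ≤ B1 := le_trans (abs_nonneg _) (hB1 0)
  have hB20 : 0 ≤ B2 := le_trans (abs_nonneg _) (hB2 0)
  have hB30 : 0 ≤ B3 := le_trans (abs_nonneg _) (hB3 0)
  have hγ0 : 0 ≤ γ := by
    refine le_trans ?_ (hγJ q hq)
    exact integral_nonneg fun ω => by positivity
  set M3 : ℝ := (2 * B1 + 3 * B2 + B3) * (β * (Real.sqrt N)⁻¹) ^ 3 * (N : ℝ)⁻¹ with hM3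
  have hM30 : 0 ≤ M3 := by positivity
  have hgd : Differentiable ℝ g := by
    have := hg 0 (by norm_num); rwa [iteratedDeriv_zero] at this
  have hgc1 : Continuous (deriv g) := by
    have := hg 1 (by norm_num); rw [iteratedDeriv_one] at this; exact this.continuous
  have hgc2 : Continuous (iteratedDeriv 2 g) := (hg 2 (by norm_num)).continuous
  -- base random vector
  set y : Ω → Fin N × Fin N → ℝ := fun ω => skX N J J' S ω with hy
  have hYmeas : ∀ r : Fin N × Fin N, r.1 < r.2 → Measurable fun ω => y ω r :=
    skX_coord_meas hJmeas hJ'meas S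
  have eqS : ∀ ω, skX N J J' S ω = Function.update (y ω) q (J q ω) := by
    intro ω
    funext r
    by_cases hrq : r = q
    · subst hrq
      rw [Function.update_self]
      simp [skX, hqS, hq]
    · rw [Function.update_of_ne hrq]
  have eqI : ∀ ω, skX N J J' (insert q S) ω = Function.update (y ω) q (J' q ω) := by
    intro ω
    funext r
    by_cases hrq : r = q
    · subst hrq
      rw [Function.update_self]
      simp [skX, Finset.mem_insert_self]
    · rw [Function.update_of_ne hrq]
      simp only [skX, hy, Finset.mem_insert, hrq, false_or]
  -- Taylor coefficients
  set A0 : Ω → ℝ := fun ω => g (skFreeEnergy N β h (Function.update (y ω) q 0)) with hA0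
  set A1 : Ω → ℝ := fun ω => skA1 g N β h (y ω) q with hA1
  set A2 : Ω → ℝ := fun ω => skA2 g N β h (y ω) q with hA2
  set R : Ω → ℝ := fun ω => g (skFreeEnergy N β h (skX N J J' S ω)) - A0 ω -
    A1 ω * J q ω - A2 ω * J q ω ^ 2 / 2 with hR
  set R' : Ω → ℝ := fun ω => g (skFreeEnergy N β h (skX N J J' (insert q S) ω)) - A0 ω -
    A1 ω * J' q ω - A2 ω * J' q ω ^ 2 / 2 with hR'
  have hT : ∀ ω, |R ω| ≤ M3 * |J q ω| ^ 3 := by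
    intro ω
    have := sk_taylor hN h hβ hg hB1 hB2 hB3 (y ω) hq (J q ω)
    rw [← eqS ω] at this
    exact this
  have hT' : ∀ ω, |R' ω| ≤ M3 * |J' q ω| ^ 3 := by
    intro ω
    have := sk_taylor hN h hβ hg hB1 hB2 hB3 (y ω) hq (J' q ω)
    rw [← eqI ω] at this
    exact this
  -- measurability
  have mS : Measurable fun ω => g (skFreeEnergy N β h (skX N J J' S ω)) :=
    hgd.continuous.measurable.comp (measurable_comp_skF hYmeas)
  have hYmeasI : ∀ r : Fin N × Fin N, r.1 < r.2 →
      Measurable fun ω => skX N J J' (insert q S) ω r :=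
    skX_coord_meas hJmeas hJ'meas (insert q S)
  have mI : Measurable fun ω => g (skFreeEnergy N β h (skX N J J' (insert q S) ω)) :=
    hgd.continuous.measurable.comp (measurable_comp_skF hYmeasI)
  have mA0 : Measurable A0 :=
    hgd.continuous.measurable.comp (measurable_comp_skF0 hYmeas q)
  have mA1 : Measurable A1 := measurable_comp_skA1 hYmeas q hgc1
  have mA2 : Measurable A2 := measurable_comp_skA2 hYmeas q hgc1 hgc2
  have mJq : Measurable (J q) := hJmeas q hq
  have mJ'q : Measurable (J' q) := hJ'meas q hq
  -- integrability of coordinates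
  have intJr : ∀ r : Fin N × Fin N, r.1 < r.2 → Integrable (J r) μ := fun r hr =>
    (hJ3 r hr).integrable (by norm_num)
  have intJ'r : ∀ r : Fin N × Fin N, r.1 < r.2 → Integrable (J' r) μ := fun r hr =>
    (hJ'3 r hr).integrable (by norm_num)
  have intJ : Integrable (J q) μ := intJr q hq
  have intJ' : Integrable (J' q) μ := intJ'r q hq
  have intJsq : Integrable (fun ω => J q ω ^ 2) μ :=
    ((hJ3 q hq).mono_exponent (p := 2) (by norm_num)).integrable_sq
  have intJ'sq : Integrable (fun ω => J' q ω ^ 2) μ :=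
    ((hJ'3 q hq).mono_exponent (p := 2) (by norm_num)).integrable_sq
  have cube_eq : ∀ (f : Ω → ℝ), (fun ω => ‖f ω‖ ^ ((3:ENNReal)).toReal) = fun ω => |f ω| ^ (3:ℕ) := by
    intro f
    funext ω
    have h3 : ((3:ENNReal)).toReal = ((3:ℕ):ℝ) := by norm_num
    rw [Real.norm_eq_abs, h3, Real.rpow_natCast]
  have intJcube : Integrable (fun ω => |J q ω| ^ (3:ℕ)) μ := by
    have := (hJ3 q hq).integrable_norm_rpow (by norm_num) (by norm_num)
    rwa [cube_eq (J q)] at this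
  have intJ'cube : Integrable (fun ω => |J' q ω| ^ (3:ℕ)) μ := by
    have := (hJ'3 q hq).integrable_norm_rpow (by norm_num) (by norm_num)
    rwa [cube_eq (J' q)] at this
  -- integrability of the pieces
  set K : ℝ := |g 0| + B1 * (Real.log 2 + |β * h|) with hK
  set L : ℝ := B1 * |β| * (Real.sqrt N)⁻¹ * (N : ℝ)⁻¹ with hL
  have hL0 : 0 ≤ L := by positivity
  have intCoordAbs : ∀ r ∈ Finset.univ.filter (fun r : Fin N × Fin N => r.1 < r.2),
      Integrable (fun ω => |Function.update (y ω) q 0 r|) μ := by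
    intro r hr
    have hrU := (Finset.mem_filter.1 hr).2
    by_cases hrq : r = q
    · subst hrq
      simp only [Function.update_self]
      simp
    · simp only [Function.update_of_ne hrq]
      simp only [hy, skX]
      by_cases hrS : r ∈ S
      · simpa [hrS] using (intJ'r r hrU).abs
      · simpa [hrS, hrU] using (intJr r hrU).abs
  have intA0 : Integrable A0 μ := by
    refine Integrable.mono'
      (g := fun ω => K + L * ∑ r ∈ Finset.univ.filter (fun r : Fin N × Fin N => r.1 < r.2),
        |Function.update (y ω) q 0 r|)
      ?_ mA0.aestronglyMeasurable ?_
    · exact (integrable_const K).add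
        ((integrable_finset_sum _ intCoordAbs).const_mul L)
    · refine Filter.Eventually.of_forall fun ω => ?_
      rw [Real.norm_eq_abs]
      have := abs_g_comp_skF_le hN0 β h hgd hB1 (Function.update (y ω) q 0)
      rw [hA0]
      calc |g (skFreeEnergy N β h (Function.update (y ω) q 0))| ≤ _ := this
      _ = K + L * ∑ r ∈ Finset.univ.filter (fun r : Fin N × Fin N => r.1 < r.2),
            |Function.update (y ω) q 0 r| := by rw [hK, hL] <;> ring
  have boundA1 : ∀ ω, ‖A1 ω‖ ≤ B1 * ((N : ℝ)⁻¹ * |β| * (Real.sqrt N)⁻¹) := fun ω =>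
    abs_skA1_le hN0 hB1 (y ω) q
  have boundA2 : ∀ ω, ‖A2 ω‖ ≤ B2 * ((N : ℝ)⁻¹ * |β| * (Real.sqrt N)⁻¹) ^ 2 +
      B1 * ((N : ℝ)⁻¹ * β ^ 2 * ((Real.sqrt N)⁻¹) ^ 2) := fun ω =>
    abs_skA2_le hN0 hB1 hB2 (y ω) q
  have intA1 : Integrable A1 μ := by
    refine Integrable.mono' (integrable_const (B1 * ((N : ℝ)⁻¹ * |β| * (Real.sqrt N)⁻¹)))
      mA1.aestronglyMeasurable ?_
    exact Filter.Eventually.of_forall boundA1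
  have intA2 : Integrable A2 μ := by
    refine Integrable.mono'
      (integrable_const (B2 * ((N : ℝ)⁻¹ * |β| * (Real.sqrt N)⁻¹) ^ 2 +
        B1 * ((N : ℝ)⁻¹ * β ^ 2 * ((Real.sqrt N)⁻¹) ^ 2)))
      mA2.aestronglyMeasurable ?_
    exact Filter.Eventually.of_forall boundA2
  have intA1J : Integrable (fun ω => A1 ω * J q ω) μ :=
    intJ.bdd_mul mA1.aestronglyMeasurable (Filter.Eventually.of_forall boundA1)
  have intA1J' : Integrable (fun ω => A1 ω * J' q ω) μ :=
    intJ'.bdd_mul mA1.aestronglyMeasurable (Filter.Eventually.of_forall boundA1)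
  have intA2Jsq : Integrable (fun ω => A2 ω * J q ω ^ 2) μ :=
    intJsq.bdd_mul mA2.aestronglyMeasurable (Filter.Eventually.of_forall boundA2)
  have intA2J'sq : Integrable (fun ω => A2 ω * J' q ω ^ 2) μ :=
    intJ'sq.bdd_mul mA2.aestronglyMeasurable (Filter.Eventually.of_forall boundA2)
  have intA2Jsq2 : Integrable (fun ω => A2 ω * J q ω ^ 2 / 2) μ := intA2Jsq.div_const 2
  have intA2J'sq2 : Integrable (fun ω => A2 ω * J' q ω ^ 2 / 2) μ := intA2J'sq.div_const 2
  have mR : Measurable R := by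
    refine (((mS.sub mA0).sub (mA1.mul mJq)).sub ?_)
    exact (mA2.mul (mJq.pow_const 2)).div_const 2
  have mR' : Measurable R' := by
    refine (((mI.sub mA0).sub (mA1.mul mJ'q)).sub ?_)
    exact (mA2.mul (mJ'q.pow_const 2)).div_const 2
  have intR : Integrable R μ := by
    refine Integrable.mono' (intJcube.const_mul M3) mR.aestronglyMeasurable ?_
    exact Filter.Eventually.of_forall fun ω => by
      rw [Real.norm_eq_abs]; exact hT ω
  have intR' : Integrable R' μ := by
    refine Integrable.mono' (intJ'cube.const_mul M3) mR'.aestronglyMeasurable ?_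
    exact Filter.Eventually.of_forall fun ω => by
      rw [Real.norm_eq_abs]; exact hT' ω
  -- independence
  set i0 := (⟨q, hq⟩ : {r : Fin N × Fin N // r.1 < r.2}) with hi0
  set f := Sum.elim (fun a : {r : Fin N × Fin N // r.1 < r.2} => J a.1)
    (fun a : {r : Fin N × Fin N // r.1 < r.2} => J' a.1) with hf
  have hfmeas : ∀ i, Measurable (f i) := by
    rintro (a | a)
    · exact hJmeas a.1 a.2
    · exact hJ'meas a.1 a.2
  set Sc : Finset ({r : Fin N × Fin N // r.1 < r.2} ⊕ {r : Fin N × Fin N // r.1 < r.2}) :=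
    Finset.univ \ {Sum.inl i0, Sum.inr i0} with hSc
  have hdisj1 : Disjoint Sc {Sum.inl i0} := by
    refine Finset.disjoint_left.2 fun a ha ha' => ?_
    rw [hSc, Finset.mem_sdiff] at ha
    rw [Finset.mem_singleton] at ha'
    exact ha.2 (by simp [ha'])
  have hdisj2 : Disjoint Sc {Sum.inr i0} := by
    refine Finset.disjoint_left.2 fun a ha ha' => ?_
    rw [hSc, Finset.mem_sdiff] at ha
    rw [Finset.mem_singleton] at ha'
    exact ha.2 (by simp [ha'])
  have hbase1 := hindep.indepFun_finset Sc {Sum.inl i0} hdisj1 hfmeas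
  have hbase2 := hindep.indepFun_finset Sc {Sum.inr i0} hdisj2 hfmeas
  have hmemInr : ∀ (r : Fin N × Fin N) (hr : r.1 < r.2), r ∈ S →
      (Sum.inr ⟨r, hr⟩ : {r : Fin N × Fin N // r.1 < r.2} ⊕ {r : Fin N × Fin N // r.1 < r.2}) ∈ Sc := by
    intro r hr hrS
    rw [hSc, Finset.mem_sdiff]
    refine ⟨Finset.mem_univ _, ?_⟩
    simp only [Finset.mem_insert, Finset.mem_singleton]
    rintro (h1 | h1)
    · exact absurd h1 (by simp)
    · have : r = q := by
        have := congrArg (fun z => Sum.elim (fun a : {r : Fin N × Fin N // r.1 < r.2} => a.1)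
          (fun a : {r : Fin N × Fin N // r.1 < r.2} => a.1) z) h1
        simpa [hi0] using this
      exact hqS (this ▸ hrS)
  have hmemInl : ∀ (r : Fin N × Fin N) (hr : r.1 < r.2), r ≠ q →
      (Sum.inl ⟨r, hr⟩ : {r : Fin N × Fin N // r.1 < r.2} ⊕ {r : Fin N × Fin N // r.1 < r.2}) ∈ Sc := by
    intro r hr hrq
    rw [hSc, Finset.mem_sdiff]
    refine ⟨Finset.mem_univ _, ?_⟩
    simp only [Finset.mem_insert, Finset.mem_singleton]
    rintro (h1 | h1)
    · have : r = q := by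
        have := congrArg (fun z => Sum.elim (fun a : {r : Fin N × Fin N // r.1 < r.2} => a.1)
          (fun a : {r : Fin N × Fin N // r.1 < r.2} => a.1) z) h1
        simpa [hi0] using this
      exact hrq this
    · exact absurd h1 (by simp)
  set build : (↥Sc → ℝ) → (Fin N × Fin N → ℝ) := fun v r =>
    if hr : r.1 < r.2 then
      (if hrS : r ∈ S then v ⟨Sum.inr ⟨r, hr⟩, hmemInr r hr hrS⟩
       else if hrq : r = q then 0
       else v ⟨Sum.inl ⟨r, hr⟩, hmemInl r hr hrq⟩)
    else 0 with hbuild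
  have hbuildmeas : ∀ r : Fin N × Fin N, r.1 < r.2 →
      Measurable fun v : ↥Sc → ℝ => build v r := by
    intro r hr
    simp only [hbuild, dif_pos hr]
    by_cases hrS : r ∈ S
    · simp only [dif_pos hrS]; exact measurable_pi_apply _
    · simp only [dif_neg hrS]
      by_cases hrq : r = q
      · simp only [dif_pos hrq]; exact measurable_const
      · simp only [dif_neg hrq]; exact measurable_pi_apply _
  have hbuild_eq : ∀ ω, build (fun i : ↥Sc => f i.1 ω) = Function.update (y ω) q 0 := by
    intro ω
    funext r
    by_cases hr : r.1 < r.2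
    · simp only [hbuild, dif_pos hr]
      by_cases hrS : r ∈ S
      · have hrq : r ≠ q := fun hh => hqS (hh ▸ hrS)
        rw [dif_pos hrS, Function.update_of_ne hrq]
        simp [hy, skX, hrS, hf]
      · rw [dif_neg hrS]
        by_cases hrq : r = q
        · rw [dif_pos hrq, hrq, Function.update_self]
        · rw [dif_neg hrq, Function.update_of_ne hrq]
          simp [hy, skX, hrS, hr, hf]
    · have hrq : r ≠ q := fun hh => hr (hh ▸ hq)
      have hrS : r ∉ S := fun hh => hr (hS r hh)
      simp only [hbuild, dif_neg hr]
      rw [Function.update_of_ne hrq]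
      simp [hy, skX, hrS, hr]
  -- A1/A2 as functions of the other coordinates
  have hA1comp : A1 = (fun v : ↥Sc → ℝ => skA1 g N β h (build v) q) ∘
      (fun ω (i : ↥Sc) => f i.1 ω) := by
    funext ω
    simp only [Function.comp_apply]
    rw [hbuild_eq ω]
    refine skA1_congr g ?_
    rw [Function.update_idem]
  have hA2comp : A2 = (fun v : ↥Sc → ℝ => skA2 g N β h (build v) q) ∘
      (fun ω (i : ↥Sc) => f i.1 ω) := by
    funext ω
    simp only [Function.comp_apply]
    rw [hbuild_eq ω]
    refine skA2_congr g ?_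
    rw [Function.update_idem]
  have hφ1meas : Measurable fun v : ↥Sc → ℝ => skA1 g N β h (build v) q :=
    measurable_comp_skA1 hbuildmeas q hgc1
  have hφ2meas : Measurable fun v : ↥Sc → ℝ => skA2 g N β h (build v) q :=
    measurable_comp_skA2 hbuildmeas q hgc1 hgc2
  have hmemT1 : (Sum.inl i0 : {r : Fin N × Fin N // r.1 < r.2} ⊕ {r : Fin N × Fin N // r.1 < r.2}) ∈
      ({Sum.inl i0} : Finset _) := Finset.mem_singleton_self _
  have hmemT2 : (Sum.inr i0 : {r : Fin N × Fin N // r.1 < r.2} ⊕ {r : Fin N × Fin N // r.1 < r.2}) ∈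
      ({Sum.inr i0} : Finset _) := Finset.mem_singleton_self _
  -- independence statements
  have hIndA1J : IndepFun A1 (J q) μ := by
    have := hbase1.comp hφ1meas
      (measurable_pi_apply (⟨Sum.inl i0, hmemT1⟩ : ({Sum.inl i0} : Finset _)))
    rw [← hA1comp] at this
    exact this
  have hIndA1J' : IndepFun A1 (J' q) μ := by
    have := hbase2.comp hφ1meas
      (measurable_pi_apply (⟨Sum.inr i0, hmemT2⟩ : ({Sum.inr i0} : Finset _)))
    rw [← hA1comp] at this
    exact this
  have hsqmeas : Measurable fun w : ({Sum.inl i0} : Finset _) → ℝ =>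
      (w (⟨Sum.inl i0, hmemT1⟩ : ({Sum.inl i0} : Finset _))) ^ 2 :=
    (measurable_pi_apply _).pow_const 2
  have hsqmeas' : Measurable fun w : ({Sum.inr i0} : Finset _) → ℝ =>
      (w (⟨Sum.inr i0, hmemT2⟩ : ({Sum.inr i0} : Finset _))) ^ 2 :=
    (measurable_pi_apply _).pow_const 2
  have hIndA2Jsq : IndepFun A2 (fun ω => J q ω ^ 2) μ := by
    have := hbase1.comp hφ2meas hsqmeas
    rw [← hA2comp] at this
    exact this
  have hIndA2J'sq : IndepFun A2 (fun ω => J' q ω ^ 2) μ := by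
    have := hbase2.comp hφ2meas hsqmeas'
    rw [← hA2comp] at this
    exact this
  -- expectation computations
  have eA1J : ∫ ω, A1 ω * J q ω ∂μ = 0 := by
    have := hIndA1J.integral_mul_eq_mul_integral intA1.aestronglyMeasurable intJ.aestronglyMeasurable
    calc ∫ ω, A1 ω * J q ω ∂μ = ∫ ω, (A1 * J q) ω ∂μ := rfl
    _ = (∫ ω, A1 ω ∂μ) * ∫ ω, J q ω ∂μ := this
    _ = 0 := by rw [hJmean q hq, mul_zero]
  have eA1J' : ∫ ω, A1 ω * J' q ω ∂μ = 0 := by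
    have := hIndA1J'.integral_mul_eq_mul_integral intA1.aestronglyMeasurable intJ'.aestronglyMeasurable
    calc ∫ ω, A1 ω * J' q ω ∂μ = ∫ ω, (A1 * J' q) ω ∂μ := rfl
    _ = (∫ ω, A1 ω ∂μ) * ∫ ω, J' q ω ∂μ := this
    _ = 0 := by rw [hJ'mean q hq, mul_zero]
  have eA2Jsq : ∫ ω, A2 ω * J q ω ^ 2 ∂μ = ∫ ω, A2 ω ∂μ := by
    have := hIndA2Jsq.integral_mul_eq_mul_integral intA2.aestronglyMeasurable intJsq.aestronglyMeasurable
    calc ∫ ω, A2 ω * J q ω ^ 2 ∂μ = ∫ ω, (A2 * fun ω => J q ω ^ 2) ω ∂μ := rfl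
    _ = (∫ ω, A2 ω ∂μ) * ∫ ω, J q ω ^ 2 ∂μ := this
    _ = ∫ ω, A2 ω ∂μ := by rw [hJvar q hq, mul_one]
  have eA2J'sq : ∫ ω, A2 ω * J' q ω ^ 2 ∂μ = ∫ ω, A2 ω ∂μ := by
    have := hIndA2J'sq.integral_mul_eq_mul_integral intA2.aestronglyMeasurable intJ'sq.aestronglyMeasurable
    calc ∫ ω, A2 ω * J' q ω ^ 2 ∂μ = ∫ ω, (A2 * fun ω => J' q ω ^ 2) ω ∂μ := rfl
    _ = (∫ ω, A2 ω ∂μ) * ∫ ω, J' q ω ^ 2 ∂μ := this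
    _ = ∫ ω, A2 ω ∂μ := by rw [hJ'var q hq, mul_one]
  -- split the two integrals
  have splitS : ∫ ω, g (skFreeEnergy N β h (skX N J J' S ω)) ∂μ =
      (∫ ω, A0 ω ∂μ) + (∫ ω, A1 ω * J q ω ∂μ) +
        (∫ ω, A2 ω * J q ω ^ 2 / 2 ∂μ) + ∫ ω, R ω ∂μ := by
    have hfun : (fun ω => g (skFreeEnergy N β h (skX N J J' S ω))) =
        fun ω => A0 ω + A1 ω * J q ω + A2 ω * J q ω ^ 2 / 2 + R ω := by
      funext ω
      rw [hR]
      ring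
    have i12 : Integrable (fun ω => A0 ω + A1 ω * J q ω) μ := intA0.add intA1J
    have i123 : Integrable (fun ω => A0 ω + A1 ω * J q ω + A2 ω * J q ω ^ 2 / 2) μ :=
      i12.add intA2Jsq2
    rw [hfun, integral_add i123 intR, integral_add i12 intA2Jsq2,
      integral_add intA0 intA1J]
  have splitI : ∫ ω, g (skFreeEnergy N β h (skX N J J' (insert q S) ω)) ∂μ =
      (∫ ω, A0 ω ∂μ) + (∫ ω, A1 ω * J' q ω ∂μ) +
        (∫ ω, A2 ω * J' q ω ^ 2 / 2 ∂μ) + ∫ ω, R' ω ∂μ := by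
    have hfun : (fun ω => g (skFreeEnergy N β h (skX N J J' (insert q S) ω))) =
        fun ω => A0 ω + A1 ω * J' q ω + A2 ω * J' q ω ^ 2 / 2 + R' ω := by
      funext ω
      rw [hR']
      ring
    have i12 : Integrable (fun ω => A0 ω + A1 ω * J' q ω) μ := intA0.add intA1J'
    have i123 : Integrable (fun ω => A0 ω + A1 ω * J' q ω + A2 ω * J' q ω ^ 2 / 2) μ :=
      i12.add intA2J'sq2
    rw [hfun, integral_add i123 intR', integral_add i12 intA2J'sq2,
      integral_add intA0 intA1J']
  have ehalf : ∫ ω, A2 ω * J q ω ^ 2 / 2 ∂μ = (∫ ω, A2 ω ∂μ) / 2 := by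
    rw [integral_div, eA2Jsq]
  have ehalf' : ∫ ω, A2 ω * J' q ω ^ 2 / 2 ∂μ = (∫ ω, A2 ω ∂μ) / 2 := by
    rw [integral_div, eA2J'sq]
  have hdiff : (∫ ω, g (skFreeEnergy N β h (skX N J J' (insert q S) ω)) ∂μ) -
      ∫ ω, g (skFreeEnergy N β h (skX N J J' S ω)) ∂μ =
      (∫ ω, R' ω ∂μ) - ∫ ω, R ω ∂μ := by
    rw [splitS, splitI, eA1J, eA1J', ehalf, ehalf']
    ring
  rw [hdiff]
  -- final bound
  have hRbound : ∫ ω, |R ω| ∂μ ≤ M3 * γ := by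
    have h1 : ∫ ω, |R ω| ∂μ ≤ ∫ ω, M3 * |J q ω| ^ 3 ∂μ :=
      integral_mono intR.abs (intJcube.const_mul M3) hT
    rw [integral_const_mul] at h1
    refine le_trans h1 ?_
    exact mul_le_mul_of_nonneg_left (hγJ q hq) hM30
  have hR'bound : ∫ ω, |R' ω| ∂μ ≤ M3 * γ := by
    have h1 : ∫ ω, |R' ω| ∂μ ≤ ∫ ω, M3 * |J' q ω| ^ 3 ∂μ :=
      integral_mono intR'.abs (intJ'cube.const_mul M3) hT'
    rw [integral_const_mul] at h1
    refine le_trans h1 ?_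
    exact mul_le_mul_of_nonneg_left (hγJ' q hq) hM30
  have habs1 : |∫ ω, R ω ∂μ| ≤ ∫ ω, |R ω| ∂μ := by
    simpa [Real.norm_eq_abs] using norm_integral_le_integral_norm (μ := μ) R
  have habs2 : |∫ ω, R' ω ∂μ| ≤ ∫ ω, |R' ω| ∂μ := by
    simpa [Real.norm_eq_abs] using norm_integral_le_integral_norm (μ := μ) R'
  calc |(∫ ω, R' ω ∂μ) - ∫ ω, R ω ∂μ| ≤ |∫ ω, R' ω ∂μ| + |∫ ω, R ω ∂μ| :=
        abs_sub _ _
  _ ≤ M3 * γ + M3 * γ := add_le_add (le_trans habs2 hR'bound) (le_trans habs1 hRbound)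
  _ = 2 * M3 * γ := by ring

set_option maxHeartbeats 4000000 in
theorem stmt14'
    {Ω : Type} [MeasurableSpace Ω] {μ : Measure Ω} [IsProbabilityMeasure μ]
    {N : ℕ} (hN : 2 ≤ N) (β h : ℝ) (hβ : 0 < β)
    (J J' : Fin N × Fin N → Ω → ℝ)
    (hJmeas : ∀ q : Fin N × Fin N, q.1 < q.2 → Measurable (J q))
    (hJ'meas : ∀ q : Fin N × Fin N, q.1 < q.2 → Measurable (J' q))
    (hindep : iIndepFun
      (Sum.elim (fun q : {q : Fin N × Fin N // q.1 < q.2} => J q.1)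
        (fun q : {q : Fin N × Fin N // q.1 < q.2} => J' q.1)) μ)
    (hJmean : ∀ q : Fin N × Fin N, q.1 < q.2 → ∫ ω, J q ω ∂μ = 0)
    (hJ'mean : ∀ q : Fin N × Fin N, q.1 < q.2 → ∫ ω, J' q ω ∂μ = 0)
    (hJvar : ∀ q : Fin N × Fin N, q.1 < q.2 → ∫ ω, (J q ω) ^ 2 ∂μ = 1)
    (hJ'var : ∀ q : Fin N × Fin N, q.1 < q.2 → ∫ ω, (J' q ω) ^ 2 ∂μ = 1)
    (γ : ℝ)
    (hJ3 : ∀ q : Fin N × Fin N, q.1 < q.2 → MemLp (J q) 3 μ)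
    (hJ'3 : ∀ q : Fin N × Fin N, q.1 < q.2 → MemLp (J' q) 3 μ)
    (hγJ : ∀ q : Fin N × Fin N, q.1 < q.2 → ∫ ω, |J q ω| ^ 3 ∂μ ≤ γ)
    (hγJ' : ∀ q : Fin N × Fin N, q.1 < q.2 → ∫ ω, |J' q ω| ^ 3 ∂μ ≤ γ)
    (g : ℝ → ℝ) (hg : ∀ p < 3, Differentiable ℝ (iteratedDeriv p g))
    (B1 B2 B3 : ℝ)
    (hB1 : ∀ t, |deriv g t| ≤ B1)
    (hB2 : ∀ t, |iteratedDeriv 2 g t| ≤ B2)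
    (hB3 : ∀ t, |iteratedDeriv 3 g t| ≤ B3) :
    |(∫ ω, g (skFreeEnergy N β h fun q => J q ω) ∂μ) -
        ∫ ω, g (skFreeEnergy N β h fun q => J' q ω) ∂μ| ≤
      26 * (B1 / 6 + B2 / 2 + B3 / 6) * β ^ 3 * γ * (Real.sqrt N)⁻¹ := by
  classical
  have hN0 : 0 < N := by omega
  have hNR : (0:ℝ) < N := by exact_mod_cast hN0
  have hsqrt : 0 < Real.sqrt N := Real.sqrt_pos.2 hNR
  have hs0 : Real.sqrt N ≠ 0 := ne_of_gt hsqrt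
  have hB10 : 0 ≤ B1 := le_trans (abs_nonneg _) (hB1 0)
  have hB20 : 0 ≤ B2 := le_trans (abs_nonneg _) (hB2 0)
  have hB30 : 0 ≤ B3 := le_trans (abs_nonneg _) (hB3 0)
  obtain ⟨q0, hq0⟩ : ∃ q0 : Fin N × Fin N, q0.1 < q0.2 :=
    ⟨((⟨0, by omega⟩ : Fin N), (⟨1, by omega⟩ : Fin N)), by simp [Fin.lt_def]⟩
  have hγ0 : 0 ≤ γ := by
    refine le_trans ?_ (hγJ _ hq0)
    exact integral_nonneg fun ω => by positivity
  set D : ℝ := 2 * ((2 * B1 + 3 * B2 + B3) * (β * (Real.sqrt N)⁻¹) ^ 3 * (N : ℝ)⁻¹) * γ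
    with hD
  have hsum0 : (0:ℝ) ≤ 2 * B1 + 3 * B2 + B3 := by linarith
  have hD0 : 0 ≤ D := by
    rw [hD]
    refine mul_nonneg (mul_nonneg (by norm_num) ?_) hγ0
    exact mul_nonneg (mul_nonneg hsum0 (by positivity)) (by positivity)
  -- telescoping
  have tele : ∀ S : Finset (Fin N × Fin N), (∀ r ∈ S, r.1 < r.2) →
      |(∫ ω, g (skFreeEnergy N β h (skX N J J' S ω)) ∂μ) -
        ∫ ω, g (skFreeEnergy N β h (skX N J J' (∅ : Finset (Fin N × Fin N)) ω)) ∂μ| ≤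
        (S.card : ℝ) * D := by
    intro S
    induction S using Finset.induction_on with
    | empty => intro _; simp
    | @insert a S ha ih =>
      intro hSub
      have hS' : ∀ r ∈ S, r.1 < r.2 := fun r hr => hSub r (Finset.mem_insert_of_mem hr)
      have haU : a.1 < a.2 := hSub a (Finset.mem_insert_self a S)
      have hswap := sk_swap hN β h hβ J J' hJmeas hJ'meas hindep hJmean hJ'mean
        hJvar hJ'var γ hJ3 hJ'3 hγJ hγJ' g hg B1 B2 B3 hB1 hB2 hB3 S hS' haU ha
      calc |(∫ ω, g (skFreeEnergy N β h (skX N J J' (insert a S) ω)) ∂μ) -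
            ∫ ω, g (skFreeEnergy N β h (skX N J J' (∅ : Finset (Fin N × Fin N)) ω)) ∂μ| ≤
          |(∫ ω, g (skFreeEnergy N β h (skX N J J' (insert a S) ω)) ∂μ) -
            ∫ ω, g (skFreeEnergy N β h (skX N J J' S ω)) ∂μ| +
          |(∫ ω, g (skFreeEnergy N β h (skX N J J' S ω)) ∂μ) -
            ∫ ω, g (skFreeEnergy N β h (skX N J J' (∅ : Finset (Fin N × Fin N)) ω)) ∂μ| :=
            abs_sub_le _ _ _
      _ ≤ D + (S.card : ℝ) * D := add_le_add hswap (ih hS')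
      _ = ((insert a S).card : ℝ) * D := by
          rw [Finset.card_insert_of_notMem ha]
          push_cast
          ring
  set Q : Finset (Fin N × Fin N) :=
    Finset.univ.filter (fun r : Fin N × Fin N => r.1 < r.2) with hQ
  have hQup : ∀ r ∈ Q, r.1 < r.2 := fun r hr => (Finset.mem_filter.1 hr).2
  have hteleQ := tele Q hQup
  -- identify the endpoints
  have hend0 : (fun ω => g (skFreeEnergy N β h (skX N J J' (∅ : Finset (Fin N × Fin N)) ω)))
      = fun ω => g (skFreeEnergy N β h fun q => J q ω) := by
    funext ω
    congr 1
    refine skFreeEnergy_congr fun r hr => ?_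
    simp [skX, hr]
  have hendQ : (fun ω => g (skFreeEnergy N β h (skX N J J' Q ω)))
      = fun ω => g (skFreeEnergy N β h fun q => J' q ω) := by
    funext ω
    congr 1
    refine skFreeEnergy_congr fun r hr => ?_
    have : r ∈ Q := Finset.mem_filter.2 ⟨Finset.mem_univ r, hr⟩
    simp [skX, this]
  rw [hend0, hendQ] at hteleQ
  have hmain : |(∫ ω, g (skFreeEnergy N β h fun q => J q ω) ∂μ) -
      ∫ ω, g (skFreeEnergy N β h fun q => J' q ω) ∂μ| ≤ (Q.card : ℝ) * D := by
    rw [abs_sub_comm]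
    exact hteleQ
  -- count and arithmetic
  have hcard : (Q.card : ℝ) ≤ (N : ℝ) * (N : ℝ) := by
    have h1 : Q.card ≤ Fintype.card (Fin N × Fin N) := by
      rw [← Finset.card_univ]
      exact Finset.card_filter_le _ _
    have h2 : Fintype.card (Fin N × Fin N) = N * N := by simp
    rw [h2] at h1
    exact_mod_cast h1
  have hstep : (Q.card : ℝ) * D ≤ (N : ℝ) * (N : ℝ) * D :=
    mul_le_mul_of_nonneg_right hcard hD0
  have hss : Real.sqrt N * Real.sqrt N = (N : ℝ) := Real.mul_self_sqrt hNR.le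
  have hNne : (N : ℝ) ≠ 0 := ne_of_gt hNR
  have hinv : ((Real.sqrt N)⁻¹) ^ 3 = (N : ℝ)⁻¹ * (Real.sqrt N)⁻¹ := by
    rw [pow_succ, pow_two, ← mul_inv, hss]
  have hid : (N : ℝ) * (N : ℝ) * D =
      (2 * (2 * B1 + 3 * B2 + B3)) * (β ^ 3 * γ * (Real.sqrt N)⁻¹) := by
    rw [hD, mul_pow, hinv]
    field_simp
  have hcoef : 2 * (2 * B1 + 3 * B2 + B3) ≤ 26 * (B1 / 6 + B2 / 2 + B3 / 6) := by
    linarith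
  have hx0 : (0:ℝ) ≤ β ^ 3 * γ * (Real.sqrt N)⁻¹ :=
    mul_nonneg (mul_nonneg (pow_nonneg hβ.le 3) hγ0) (by positivity)
  calc |(∫ ω, g (skFreeEnergy N β h fun q => J q ω) ∂μ) -
      ∫ ω, g (skFreeEnergy N β h fun q => J' q ω) ∂μ| ≤ (Q.card : ℝ) * D := hmain
  _ ≤ (N : ℝ) * (N : ℝ) * D := hstep
  _ = (2 * (2 * B1 + 3 * B2 + B3)) * (β ^ 3 * γ * (Real.sqrt N)⁻¹) := hid
  _ ≤ (26 * (B1 / 6 + B2 / 2 + B3 / 6)) * (β ^ 3 * γ * (Real.sqrt N)⁻¹) :=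
      mul_le_mul_of_nonneg_right hcoef hx0
  _ = 26 * (B1 / 6 + B2 / 2 + B3 / 6) * β ^ 3 * γ * (Real.sqrt N)⁻¹ := by ring

theorem stmt14
    {Ω : Type} [MeasurableSpace Ω] {μ : Measure Ω} [IsProbabilityMeasure μ]
    {N : ℕ} (hN : 2 ≤ N) (β h : ℝ) (hβ : 0 < β)
    (J J' : Fin N × Fin N → Ω → ℝ)
    (hJmeas : ∀ q : Fin N × Fin N, q.1 < q.2 → Measurable (J q))
    (hJ'meas : ∀ q : Fin N × Fin N, q.1 < q.2 → Measurable (J' q))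
    (hindep : iIndepFun
      (Sum.elim (fun q : {q : Fin N × Fin N // q.1 < q.2} => J q.1)
        (fun q : {q : Fin N × Fin N // q.1 < q.2} => J' q.1)) μ)
    (hJmean : ∀ q : Fin N × Fin N, q.1 < q.2 → ∫ ω, J q ω ∂μ = 0)
    (hJ'mean : ∀ q : Fin N × Fin N, q.1 < q.2 → ∫ ω, J' q ω ∂μ = 0)
    (hJvar : ∀ q : Fin N × Fin N, q.1 < q.2 → ∫ ω, (J q ω) ^ 2 ∂μ = 1)
    (hJ'var : ∀ q : Fin N × Fin N, q.1 < q.2 → ∫ ω, (J' q ω) ^ 2 ∂μ = 1)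
    (γ : ℝ)
    (hJ3 : ∀ q : Fin N × Fin N, q.1 < q.2 → MemLp (J q) 3 μ)
    (hJ'3 : ∀ q : Fin N × Fin N, q.1 < q.2 → MemLp (J' q) 3 μ)
    (hγJ : ∀ q : Fin N × Fin N, q.1 < q.2 → ∫ ω, |J q ω| ^ 3 ∂μ ≤ γ)
    (hγJ' : ∀ q : Fin N × Fin N, q.1 < q.2 → ∫ ω, |J' q ω| ^ 3 ∂μ ≤ γ)
    (g : ℝ → ℝ) (hg : ∀ p < 3, Differentiable ℝ (iteratedDeriv p g))
    (B1 B2 B3 : ℝ)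
    (hB1 : ∀ t, |deriv g t| ≤ B1)
    (hB2 : ∀ t, |iteratedDeriv 2 g t| ≤ B2)
    (hB3 : ∀ t, |iteratedDeriv 3 g t| ≤ B3) :
    |(∫ ω, g (skFreeEnergy N β h fun q => J q ω) ∂μ) -
        ∫ ω, g (skFreeEnergy N β h fun q => J' q ω) ∂μ| ≤
      26 * (B1 / 6 + B2 / 2 + B3 / 6) * β ^ 3 * γ * (Real.sqrt N)⁻¹ :=
  stmt14' hN β h hβ J J' hJmeas hJ'meas hindep hJmean hJ'mean hJvar hJ'var γ
    hJ3 hJ'3 hγJ hγJ' g hg B1 B2 B3 hB1 hB2 hB3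
end

section
/- Let I be an open interval containing 0, let 𝔉 be a finite nonempty collection of functions Iⁿ → ℝ, each thrice differentiable in each coordinate, with C_r := sup{ |∂ᵢʳ f(x)| : 1 ≤ i ≤ n, f ∈ 𝔉, x ∈ Iⁿ } < ∞ for r = 1, 2, 3, and let α ≥ 1. For each i define e_i(x) := Σ_{f∈𝔉} α ∂ᵢf(x) · p(x,f), where p(x,f) := e^{α f(x)} / Σ_{f'∈𝔉} e^{α f'(x)}. Then for all i and all x ∈ Iⁿ: |e_i(x)| ≤ α C₁, |∂ᵢ e_i(x)| ≤ α²(C₂ + 2C₁²), and |∂ᵢ² e_i(x)| ≤ α³(C₃ + 6C₁C₂ + 6C₁³). -/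
open MeasureTheory ProbabilityTheory

/-- The `p`-fold partial derivative of `f` in the `i`-th coordinate, at `x`. -/
noncomputable def pderiv (n : ℕ) (f : (Fin n → ℝ) → ℝ) (i : Fin n) (p : ℕ)
    (x : Fin n → ℝ) : ℝ :=
  iteratedDeriv p (fun t => f (Function.update x i t)) (x i)

/-- `f` is thrice differentiable in each coordinate on `Iⁿ`. -/
def CoordDiff3 (n : ℕ) (I : Set ℝ) (f : (Fin n → ℝ) → ℝ) : Prop :=
  ∀ (i : Fin n) (x : Fin n → ℝ), (∀ j, x j ∈ I) →
    ∀ p < 3, DifferentiableOn ℝ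
      (iteratedDeriv p fun t => f (Function.update x i t)) I

/-- The set whose supremum is `λ_r(f)`. -/
def lamSet (n : ℕ) (I : Set ℝ) (f : (Fin n → ℝ) → ℝ) (r : ℕ) : Set ℝ :=
  { y | ∃ (i : Fin n) (p : ℕ) (x : Fin n → ℝ),
      1 ≤ p ∧ p ≤ r ∧ (∀ j, x j ∈ I) ∧
      y = |pderiv n f i p x| ^ ((r : ℝ) / (p : ℝ)) }

/-- `λ_r(f) = sup { |∂ᵢᵖ f(x)|^{r/p} : 1 ≤ i ≤ n, 1 ≤ p ≤ r, x ∈ Iⁿ }`. -/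
noncomputable def lam (n : ℕ) (I : Set ℝ) (f : (Fin n → ℝ) → ℝ) (r : ℕ) : ℝ :=
  sSup (lamSet n I f r)

/-- The Gibbs probability `p(x, k) = e^{α f_k(x)} / Σ_{k'} e^{α f_{k'}(x)}`. -/
noncomputable def gibbsP {κ : Type} [Fintype κ] (n : ℕ)
    (f : κ → (Fin n → ℝ) → ℝ) (α : ℝ) (x : Fin n → ℝ) (k : κ) : ℝ :=
  Real.exp (α * f k x) / ∑ k', Real.exp (α * f k' x)

/-- `e_i(x) = Σ_k α ∂ᵢ f_k(x) · p(x, k)`. -/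
noncomputable def gibbsE {κ : Type} [Fintype κ] (n : ℕ)
    (f : κ → (Fin n → ℝ) → ℝ) (α : ℝ) (i : Fin n) (x : Fin n → ℝ) : ℝ :=
  ∑ k, α * pderiv n (f k) i 1 x * gibbsP n f α x k

section helpers
variable {κ : Type} [Fintype κ] [Nonempty κ]

noncomputable def gSS (α : ℝ) (g : κ → ℝ → ℝ) (t : ℝ) : ℝ := ∑ k, Real.exp (α * g k t)

lemma gSS_pos (α : ℝ) (g : κ → ℝ → ℝ) (t : ℝ) : 0 < gSS α g t :=
  Finset.sum_pos (fun _ _ => Real.exp_pos _) Finset.univ_nonempty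

noncomputable def gPP (α : ℝ) (g : κ → ℝ → ℝ) (k : κ) (t : ℝ) : ℝ :=
  Real.exp (α * g k t) / gSS α g t

lemma gPP_pos (α : ℝ) (g : κ → ℝ → ℝ) (k : κ) (t : ℝ) : 0 < gPP α g k t :=
  div_pos (Real.exp_pos _) (gSS_pos α g t)

lemma gPP_sum (α : ℝ) (g : κ → ℝ → ℝ) (t : ℝ) : ∑ k, gPP α g k t = 1 := by
  simp only [gPP]
  rw [← Finset.sum_div]
  exact div_self (gSS_pos α g t).ne'

lemma gA_bound (α : ℝ) (g : κ → ℝ → ℝ) (t : ℝ) (h : κ → ℝ) (M : ℝ)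
    (hM : ∀ k, |h k| ≤ M) : |∑ k, h k * gPP α g k t| ≤ M := by
  calc |∑ k, h k * gPP α g k t| ≤ ∑ k, |h k * gPP α g k t| := Finset.abs_sum_le_sum_abs _ _
    _ ≤ ∑ k, M * gPP α g k t := by
        refine Finset.sum_le_sum fun k _ => ?_
        rw [abs_mul, abs_of_pos (gPP_pos α g k t)]
        exact mul_le_mul_of_nonneg_right (hM k) (gPP_pos α g k t).le
    _ = M := by rw [← Finset.mul_sum, gPP_sum, mul_one]

lemma hasDerivAt_gPP (α : ℝ) (g : κ → ℝ → ℝ) (d : κ → ℝ) (t : ℝ)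
    (hd : ∀ k, HasDerivAt (g k) (d k) t) (k : κ) :
    HasDerivAt (gPP α g k)
      (gPP α g k t * (α * d k - α * ∑ j, d j * gPP α g j t)) t := by
  have hS : HasDerivAt (gSS α g) (∑ j, Real.exp (α * g j t) * (α * d j)) t := by
    apply HasDerivAt.fun_sum
    intro j _
    exact ((hd j).const_mul α).exp
  have hN : HasDerivAt (fun t => Real.exp (α * g k t)) (Real.exp (α * g k t) * (α * d k)) t :=
    ((hd k).const_mul α).exp
  have key := hN.fun_div hS (gSS_pos α g t).ne'
  refine key.congr_deriv (Eq.symm ?_)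
  have hS0 : gSS α g t ≠ 0 := (gSS_pos α g t).ne'
  have hsum : ∑ j, d j * gPP α g j t = (∑ j, d j * Real.exp (α * g j t)) / gSS α g t := by
    rw [Finset.sum_div]
    exact Finset.sum_congr rfl fun j _ => by rw [gPP]; ring
  rw [gPP, hsum]
  have hsum2 : ∑ j, Real.exp (α * g j t) * (α * d j) = α * ∑ j, d j * Real.exp (α * g j t) := by
    rw [Finset.mul_sum]; exact Finset.sum_congr rfl fun j _ => by ring
  rw [hsum2]
  field_simp

lemma hasDerivAt_weighted (α : ℝ) (g : κ → ℝ → ℝ) (d : κ → ℝ) (t : ℝ)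
    (hd : ∀ k, HasDerivAt (g k) (d k) t)
    (h : κ → ℝ → ℝ) (h' : κ → ℝ) (hh : ∀ k, HasDerivAt (h k) (h' k) t) :
    HasDerivAt (fun t => ∑ k, h k t * gPP α g k t)
      ((∑ k, h' k * gPP α g k t) + α * (∑ k, h k t * d k * gPP α g k t)
        - α * (∑ j, d j * gPP α g j t) * (∑ k, h k t * gPP α g k t)) t := by
  have key : HasDerivAt (fun t => ∑ k, h k t * gPP α g k t)
      (∑ k, (h' k * gPP α g k t +
        h k t * (gPP α g k t * (α * d k - α * ∑ j, d j * gPP α g j t)))) t := by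
    apply HasDerivAt.fun_sum
    intro k _
    exact (hh k).mul (hasDerivAt_gPP α g d t hd k)
  convert key using 1
  set D := ∑ j, d j * gPP α g j t with hD
  have e : ∀ k : κ, h' k * gPP α g k t + h k t * (gPP α g k t * (α * d k - α * D))
      = h' k * gPP α g k t + (α * (h k t * d k * gPP α g k t)
        - (α * D) * (h k t * gPP α g k t)) := fun k => by ring
  rw [Finset.sum_congr rfl (fun k _ => e k), Finset.sum_add_distrib, Finset.sum_sub_distrib,
    ← Finset.mul_sum, ← Finset.mul_sum]
  ring

lemma abs_mul_le {a b A B : ℝ} (ha : |a| ≤ A) (hb : |b| ≤ B) : |a * b| ≤ A * B := by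
  rw [abs_mul]
  exact mul_le_mul ha hb (abs_nonneg _) ((abs_nonneg a).trans ha)

lemma tri3 (a b c : ℝ) : |a + b - c| ≤ |a| + |b| + |c| := by
  have h1 := abs_sub (a + b) c
  have h2 := abs_add_le a b
  linarith

lemma tri4 (a b c d : ℝ) : |a + b - (c + d)| ≤ |a| + |b| + |c| + |d| := by
  have h1 := abs_sub (a + b) (c + d)
  have h2 := abs_add_le a b
  have h3 := abs_add_le c d
  linarith

lemma onevar {I : Set ℝ} (hIopen : IsOpen I)
    (g : κ → ℝ → ℝ) (α C1 C2 C3 : ℝ) (hα : 1 ≤ α)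
    (hg0 : ∀ k, DifferentiableOn ℝ (g k) I)
    (hg1 : ∀ k, DifferentiableOn ℝ (deriv (g k)) I)
    (hg2 : ∀ k, DifferentiableOn ℝ (deriv (deriv (g k))) I)
    (hb1 : ∀ k, ∀ t ∈ I, |deriv (g k) t| ≤ C1)
    (hb2 : ∀ k, ∀ t ∈ I, |deriv (deriv (g k)) t| ≤ C2)
    (hb3 : ∀ k, ∀ t ∈ I, |deriv (deriv (deriv (g k))) t| ≤ C3)
    (t0 : ℝ) (ht0 : t0 ∈ I) :
    |∑ k, (α * deriv (g k) t0) * gPP α g k t0| ≤ α * C1 ∧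
    |deriv (fun t => ∑ k, (α * deriv (g k) t) * gPP α g k t) t0| ≤ α ^ 2 * (C2 + 2 * C1 ^ 2) ∧
    |deriv (deriv (fun t => ∑ k, (α * deriv (g k) t) * gPP α g k t)) t0| ≤
      α ^ 3 * (C3 + 6 * C1 * C2 + 6 * C1 ^ 3) := by
  have hα0 : (0 : ℝ) ≤ α := by linarith
  have hαa : |α| ≤ α := le_of_eq (abs_of_nonneg hα0)
  obtain ⟨k0⟩ := ‹Nonempty κ›
  have hC1nn : 0 ≤ C1 := (abs_nonneg _).trans (hb1 k0 t0 ht0)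
  have hC2nn : 0 ≤ C2 := (abs_nonneg _).trans (hb2 k0 t0 ht0)
  have hC3nn : 0 ≤ C3 := (abs_nonneg _).trans (hb3 k0 t0 ht0)
  -- derivatives exist
  have hgd0 : ∀ k, ∀ t ∈ I, HasDerivAt (g k) (deriv (g k) t) t := fun k t ht =>
    ((hg0 k).differentiableAt (hIopen.mem_nhds ht)).hasDerivAt
  have hgd1 : ∀ k, ∀ t ∈ I, HasDerivAt (deriv (g k)) (deriv (deriv (g k)) t) t := fun k t ht =>
    ((hg1 k).differentiableAt (hIopen.mem_nhds ht)).hasDerivAt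
  have hgd2 : ∀ k, ∀ t ∈ I, HasDerivAt (deriv (deriv (g k))) (deriv (deriv (deriv (g k))) t) t :=
    fun k t ht => ((hg2 k).differentiableAt (hIopen.mem_nhds ht)).hasDerivAt
  -- first bound
  have hE0 : |∑ k, (α * deriv (g k) t0) * gPP α g k t0| ≤ α * C1 :=
    gA_bound α g t0 _ _ (fun k => abs_mul_le hαa (hb1 k t0 ht0))
  refine ⟨hE0, ?_, ?_⟩
  all_goals {
  -- first derivative of E, valid on all of I
  have hE' : ∀ t ∈ I, HasDerivAt (fun t => ∑ k, (α * deriv (g k) t) * gPP α g k t)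
      ((∑ k, (α * deriv (deriv (g k)) t) * gPP α g k t)
        + α * (∑ k, (α * deriv (g k) t) * deriv (g k) t * gPP α g k t)
        - α * (∑ j, deriv (g j) t * gPP α g j t)
            * (∑ k, (α * deriv (g k) t) * gPP α g k t)) t := by
    intro t ht
    exact hasDerivAt_weighted α g (fun k => deriv (g k) t) t (fun k => hgd0 k t ht)
      (fun k t => α * deriv (g k) t) (fun k => α * deriv (deriv (g k)) t)
      (fun k => (hgd1 k t ht).const_mul α)
  -- bounds on basic averages at t0
  have bA0 : |∑ j, deriv (g j) t0 * gPP α g j t0| ≤ C1 :=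
    gA_bound α g t0 _ _ (fun k => hb1 k t0 ht0)
  have bE : |∑ k, (α * deriv (g k) t0) * gPP α g k t0| ≤ α * C1 := hE0
  have bS1 : |∑ k, (α * deriv (deriv (g k)) t0) * gPP α g k t0| ≤ α * C2 :=
    gA_bound α g t0 _ _ (fun k => abs_mul_le hαa (hb2 k t0 ht0))
  have bS2 : |∑ k, (α * deriv (g k) t0) * deriv (g k) t0 * gPP α g k t0| ≤ α * C1 * C1 :=
    gA_bound α g t0 _ _ (fun k => abs_mul_le (abs_mul_le hαa (hb1 k t0 ht0)) (hb1 k t0 ht0))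
  have bE1 : |(∑ k, (α * deriv (deriv (g k)) t0) * gPP α g k t0)
        + α * (∑ k, (α * deriv (g k) t0) * deriv (g k) t0 * gPP α g k t0)
        - α * (∑ j, deriv (g j) t0 * gPP α g j t0)
            * (∑ k, (α * deriv (g k) t0) * gPP α g k t0)|
      ≤ α * C2 + α * (α * C1 * C1) + α * C1 * (α * C1) := by
    refine (tri3 _ _ _).trans ?_
    have h3 : |α * (∑ j, deriv (g j) t0 * gPP α g j t0)
        * (∑ k, (α * deriv (g k) t0) * gPP α g k t0)| ≤ α * C1 * (α * C1) :=
      abs_mul_le (abs_mul_le hαa bA0) bE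
    have h2 : |α * (∑ k, (α * deriv (g k) t0) * deriv (g k) t0 * gPP α g k t0)|
        ≤ α * (α * C1 * C1) := abs_mul_le hαa bS2
    linarith
  first
  | · -- second part: |deriv E t0| bound
      rw [(hE' t0 ht0).deriv]
      refine bE1.trans ?_
      nlinarith [mul_nonneg hC1nn hC1nn, sq_nonneg α, mul_nonneg hα0 hC2nn,
        mul_nonneg (mul_nonneg hα0 hC1nn) hC1nn]
  | · -- third part
      -- second derivatives of the three averages at t0
      have hB1 := hasDerivAt_weighted α g (fun k => deriv (g k) t0) t0 (fun k => hgd0 k t0 ht0)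
        (fun k t => α * deriv (deriv (g k)) t) (fun k => α * deriv (deriv (deriv (g k))) t0)
        (fun k => (hgd2 k t0 ht0).const_mul α)
      have hB2 := hasDerivAt_weighted α g (fun k => deriv (g k) t0) t0 (fun k => hgd0 k t0 ht0)
        (fun k t => (α * deriv (g k) t) * deriv (g k) t)
        (fun k => (α * deriv (deriv (g k)) t0) * deriv (g k) t0
          + (α * deriv (g k) t0) * deriv (deriv (g k)) t0)
        (fun k => ((hgd1 k t0 ht0).const_mul α).mul (hgd1 k t0 ht0))
      have hA0 := hasDerivAt_weighted α g (fun k => deriv (g k) t0) t0 (fun k => hgd0 k t0 ht0)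
        (fun k t => deriv (g k) t) (fun k => deriv (deriv (g k)) t0)
        (fun k => hgd1 k t0 ht0)
      have hEd := hE' t0 ht0
      have hE1' : HasDerivAt (fun t =>
          (∑ k, (α * deriv (deriv (g k)) t) * gPP α g k t)
            + α * (∑ k, (α * deriv (g k) t) * deriv (g k) t * gPP α g k t)
            - α * (∑ j, deriv (g j) t * gPP α g j t)
                * (∑ k, (α * deriv (g k) t) * gPP α g k t)) _ t0 :=
        (hB1.add (hB2.const_mul α)).sub ((hA0.const_mul α).mul hEd)
      have hev : deriv (fun t => ∑ k, (α * deriv (g k) t) * gPP α g k t) =ᶠ[nhds t0]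
          (fun t => (∑ k, (α * deriv (deriv (g k)) t) * gPP α g k t)
            + α * (∑ k, (α * deriv (g k) t) * deriv (g k) t * gPP α g k t)
            - α * (∑ j, deriv (g j) t * gPP α g j t)
                * (∑ k, (α * deriv (g k) t) * gPP α g k t)) :=
        Filter.eventuallyEq_of_mem (hIopen.mem_nhds ht0) (fun t ht => (hE' t ht).deriv)
      rw [hev.deriv_eq, hE1'.deriv]
      -- now bound the big value
      have bS3 : |∑ k, (α * deriv (deriv (deriv (g k))) t0) * gPP α g k t0| ≤ α * C3 :=
        gA_bound α g t0 _ _ (fun k => abs_mul_le hαa (hb3 k t0 ht0))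
      have bS4 : |∑ k, (α * deriv (deriv (g k)) t0) * deriv (g k) t0 * gPP α g k t0|
          ≤ α * C2 * C1 :=
        gA_bound α g t0 _ _ (fun k => abs_mul_le (abs_mul_le hαa (hb2 k t0 ht0)) (hb1 k t0 ht0))
      have bS5 : |∑ k, ((α * deriv (deriv (g k)) t0) * deriv (g k) t0
            + (α * deriv (g k) t0) * deriv (deriv (g k)) t0) * gPP α g k t0|
          ≤ α * C2 * C1 + α * C1 * C2 :=
        gA_bound α g t0 _ _ (fun k => (abs_add_le _ _).trans (add_le_add
          (abs_mul_le (abs_mul_le hαa (hb2 k t0 ht0)) (hb1 k t0 ht0))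
          (abs_mul_le (abs_mul_le hαa (hb1 k t0 ht0)) (hb2 k t0 ht0))))
      have bS6 : |∑ k, (α * deriv (g k) t0) * deriv (g k) t0 * deriv (g k) t0 * gPP α g k t0|
          ≤ α * C1 * C1 * C1 :=
        gA_bound α g t0 _ _ (fun k => abs_mul_le
          (abs_mul_le (abs_mul_le hαa (hb1 k t0 ht0)) (hb1 k t0 ht0)) (hb1 k t0 ht0))
      have hV1 : |(∑ k, (α * deriv (deriv (deriv (g k))) t0) * gPP α g k t0)
            + α * (∑ k, (α * deriv (deriv (g k)) t0) * deriv (g k) t0 * gPP α g k t0)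
            - α * (∑ j, deriv (g j) t0 * gPP α g j t0)
                * (∑ k, (α * deriv (deriv (g k)) t0) * gPP α g k t0)|
          ≤ α * C3 + α * (α * C2 * C1) + α * C1 * (α * C2) := by
        refine (tri3 _ _ _).trans ?_
        have h2 := abs_mul_le hαa bS4
        have h3 := abs_mul_le (abs_mul_le hαa bA0) bS1
        linarith
      have hV2 : |(∑ k, ((α * deriv (deriv (g k)) t0) * deriv (g k) t0
              + (α * deriv (g k) t0) * deriv (deriv (g k)) t0) * gPP α g k t0)
            + α * (∑ k, (α * deriv (g k) t0) * deriv (g k) t0 * deriv (g k) t0 * gPP α g k t0)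
            - α * (∑ j, deriv (g j) t0 * gPP α g j t0)
                * (∑ k, (α * deriv (g k) t0) * deriv (g k) t0 * gPP α g k t0)|
          ≤ (α * C2 * C1 + α * C1 * C2) + α * (α * C1 * C1 * C1) + α * C1 * (α * C1 * C1) := by
        refine (tri3 _ _ _).trans ?_
        have h2 := abs_mul_le hαa bS6
        have h3 := abs_mul_le (abs_mul_le hαa bA0) bS2
        linarith
      have hV0 : |(∑ k, deriv (deriv (g k)) t0 * gPP α g k t0)
            + α * (∑ k, deriv (g k) t0 * deriv (g k) t0 * gPP α g k t0)
            - α * (∑ j, deriv (g j) t0 * gPP α g j t0)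
                * (∑ k, deriv (g k) t0 * gPP α g k t0)|
          ≤ C2 + α * (C1 * C1) + α * C1 * C1 := by
        have b7 : |∑ k, deriv (deriv (g k)) t0 * gPP α g k t0| ≤ C2 :=
          gA_bound α g t0 _ _ (fun k => hb2 k t0 ht0)
        have b8 : |∑ k, deriv (g k) t0 * deriv (g k) t0 * gPP α g k t0| ≤ C1 * C1 :=
          gA_bound α g t0 _ _ (fun k => abs_mul_le (hb1 k t0 ht0) (hb1 k t0 ht0))
        refine (tri3 _ _ _).trans ?_
        have h2 := abs_mul_le hαa b8
        have h3 := abs_mul_le (abs_mul_le hαa bA0) bA0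
        linarith
      have h2 := abs_mul_le hαa hV2
      have h3 := abs_mul_le (abs_mul_le hαa hV0) bE
      have h4 := abs_mul_le (abs_mul_le hαa bA0) bE1
      have hα3 : α ≤ α ^ 3 := le_self_pow₀ hα (by norm_num)
      have hα23 : α ^ 2 ≤ α ^ 3 := pow_le_pow_right₀ hα (by norm_num)
      refine ((tri4 _ _ _ _).trans
        (add_le_add (add_le_add (add_le_add hV1 h2) h3) h4)).trans ?_
      nlinarith [mul_le_mul_of_nonneg_right hα3 hC3nn,
        mul_le_mul_of_nonneg_right hα23 (mul_nonneg hC1nn hC2nn),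
        mul_nonneg (mul_nonneg hC1nn hC1nn) hC1nn,
        mul_nonneg hC1nn hC2nn, mul_nonneg hα0 hα0]
  }
end helpers

theorem stmt19
    {n : ℕ} {I : Set ℝ} (hIopen : IsOpen I) (hIconn : I.OrdConnected)
    (hI0 : (0 : ℝ) ∈ I)
    {κ : Type} [Fintype κ] [Nonempty κ]
    (f : κ → (Fin n → ℝ) → ℝ) (hf : ∀ k, CoordDiff3 n I (f k))
    (C1 C2 C3 : ℝ)
    (hC1 : ∀ (k : κ) (i : Fin n) (x : Fin n → ℝ), (∀ j, x j ∈ I) →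
      |pderiv n (f k) i 1 x| ≤ C1)
    (hC2 : ∀ (k : κ) (i : Fin n) (x : Fin n → ℝ), (∀ j, x j ∈ I) →
      |pderiv n (f k) i 2 x| ≤ C2)
    (hC3 : ∀ (k : κ) (i : Fin n) (x : Fin n → ℝ), (∀ j, x j ∈ I) →
      |pderiv n (f k) i 3 x| ≤ C3)
    (α : ℝ) (hα : 1 ≤ α)
    (i : Fin n) (x : Fin n → ℝ) (hx : ∀ j, x j ∈ I) :
    |gibbsE n f α i x| ≤ α * C1 ∧
    |pderiv n (gibbsE n f α i) i 1 x| ≤ α ^ 2 * (C2 + 2 * C1 ^ 2) ∧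
    |pderiv n (gibbsE n f α i) i 2 x| ≤
      α ^ 3 * (C3 + 6 * C1 * C2 + 6 * C1 ^ 3) := by
  classical
  have hupd : ∀ t ∈ I, ∀ j, Function.update x i t j ∈ I := by
    intro t ht j
    rcases eq_or_ne j i with h | h
    · subst h; simpa using ht
    · simpa [Function.update_of_ne h] using hx j
  have hpd : ∀ (F : (Fin n → ℝ) → ℝ) (p : ℕ) (t : ℝ),
      pderiv n F i p (Function.update x i t)
        = iteratedDeriv p (fun s => F (Function.update x i s)) t := by
    intro F p t
    simp [pderiv, Function.update_idem]
  have hg0 : ∀ k, DifferentiableOn ℝ (fun t => f k (Function.update x i t)) I := by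
    intro k
    simpa [iteratedDeriv_zero] using hf k i x hx 0 (by norm_num)
  have hg1 : ∀ k, DifferentiableOn ℝ (deriv (fun t => f k (Function.update x i t))) I := by
    intro k
    have := hf k i x hx 1 (by norm_num)
    rwa [iteratedDeriv_one] at this
  have hg2 : ∀ k, DifferentiableOn ℝ
      (deriv (deriv (fun t => f k (Function.update x i t)))) I := by
    intro k
    have := hf k i x hx 2 (by norm_num)
    rwa [iteratedDeriv_succ, iteratedDeriv_one] at this
  have hb1 : ∀ k, ∀ t ∈ I, |deriv (fun s => f k (Function.update x i s)) t| ≤ C1 := by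
    intro k t ht
    have := hC1 k i (Function.update x i t) (hupd t ht)
    rwa [hpd, iteratedDeriv_one] at this
  have hb2 : ∀ k, ∀ t ∈ I,
      |deriv (deriv (fun s => f k (Function.update x i s))) t| ≤ C2 := by
    intro k t ht
    have := hC2 k i (Function.update x i t) (hupd t ht)
    rwa [hpd, iteratedDeriv_succ, iteratedDeriv_one] at this
  have hb3 : ∀ k, ∀ t ∈ I,
      |deriv (deriv (deriv (fun s => f k (Function.update x i s)))) t| ≤ C3 := by
    intro k t ht
    have := hC3 k i (Function.update x i t) (hupd t ht)
    rwa [hpd, iteratedDeriv_succ, iteratedDeriv_succ, iteratedDeriv_one] at this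
  obtain ⟨H1, H2, H3⟩ := onevar hIopen (fun k t => f k (Function.update x i t))
    α C1 C2 C3 hα hg0 hg1 hg2 hb1 hb2 hb3 (x i) (hx i)
  have hEbr : (fun t => gibbsE n f α i (Function.update x i t))
      = fun t => ∑ k, α * deriv (fun s => f k (Function.update x i s)) t
          * gPP α (fun k t => f k (Function.update x i t)) k t := by
    funext t
    simp only [gibbsE, hpd, iteratedDeriv_one]
    rfl
  have hx0 : Function.update x i (x i) = x := Function.update_eq_self i x
  refine ⟨?_, ?_, ?_⟩
  · have e1 := congrFun hEbr (x i)
    simp only [hx0] at e1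
    rw [e1]
    exact H1
  · have e2 : pderiv n (gibbsE n f α i) i 1 x
        = deriv (fun t => ∑ k, α * deriv (fun s => f k (Function.update x i s)) t
            * gPP α (fun k t => f k (Function.update x i t)) k t) (x i) := by
      rw [pderiv, iteratedDeriv_one, hEbr]
    rw [e2]
    exact H2
  · have e3 : pderiv n (gibbsE n f α i) i 2 x
        = deriv (deriv (fun t => ∑ k, α * deriv (fun s => f k (Function.update x i s)) t
            * gPP α (fun k t => f k (Function.update x i t)) k t)) (x i) := by
      rw [pderiv, iteratedDeriv_succ, iteratedDeriv_one, hEbr]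
    rw [e3]
    exact H3
end
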